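/- arXiv:2002.12463 — 5 statements merged into one kernel-verified Lean document; each statement's English description precedes it below -/
import Mathlib

section
/- Let Y be a finite set of classes, x ∈ ℝ^m, f : ℝ^m → Y a classifier, and σ > 0. Suppose there exist p_A, p_B ∈ (0,1) and a class c_A ∈ Y such that P_{ε ~ N(0, σ²𝟙)}( f(x + ε) = c_A ) ≥ p_A ≥ p_B ≥ max_{c ≠ c_A} P_{ε ~ N(0, σ²𝟙)}( f(x + ε) = c ). Then for every δ ∈ ℝ^m with ‖δ‖₂ < (σ/2)(Φ⁻¹(p_A) − Φ⁻¹(p_B)) and every class c_B ≠ c_A, it holds that P_{ε ~ N(0, σ²𝟙)}( f(x + δ + ε) = c_A ) > P_{ε ~ N(0, σ²𝟙)}( f(x + δ + ε) = c_B ); in particular the smoothed classifier g(x) := argmax_c P_{ε ~ N(0,σ²𝟙)}(f(x+ε) = c) satisfies g(x + δ) = c_A. -/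
open MeasureTheory ProbabilityTheory Matrix Set

noncomputable def Phi (x : ℝ) : ℝ := ((gaussianReal 0 1) (Set.Iic x)).toReal

noncomputable def PhiInv : ℝ → ℝ := Function.invFun Phi

noncomputable def gaussianPDF {d : ℕ} (μ : EuclideanSpace ℝ (Fin d))
    (S : Matrix (Fin d) (Fin d) ℝ) (z : EuclideanSpace ℝ (Fin d)) : ℝ :=
  (2 * Real.pi) ^ (-(d : ℝ) / 2) * S.det ^ (-(1 : ℝ) / 2) *
    Real.exp (-(1 / 2) * ((fun i => z i - μ i) ⬝ᵥ (S⁻¹ *ᵥ fun i => z i - μ i)))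

noncomputable def gaussianMeasure {d : ℕ} (μ : EuclideanSpace ℝ (Fin d))
    (S : Matrix (Fin d) (Fin d) ℝ) : Measure (EuclideanSpace ℝ (Fin d)) :=
  volume.withDensity fun z => ENNReal.ofReal (gaussianPDF μ S z)

open scoped NNReal ENNReal RealInnerProductSpace

section PhiLemmas

open Filter Real

lemma gaussianReal_Iic_eq (x : ℝ) :
    (gaussianReal 0 1) (Set.Iic x) = ENNReal.ofReal (Phi x) :=
  (ENNReal.ofReal_toReal (measure_ne_top _ _)).symm

lemma Phi_mono : Monotone Phi := fun _ _ hab =>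
  ENNReal.toReal_mono (measure_ne_top _ _) (measure_mono (Iic_subset_Iic.2 hab))

lemma gaussianReal_pos_of_volume_pos {s : Set ℝ} (hs : MeasurableSet s)
    (h : 0 < volume s) : 0 < gaussianReal 0 1 s := by
  rw [gaussianReal_of_var_ne_zero 0 one_ne_zero, withDensity_apply _ hs]
  rw [lintegral_pos_iff_support (measurable_gaussianPDF 0 1)]
  have hsupp : Function.support (ProbabilityTheory.gaussianPDF 0 1) = Set.univ :=
    Set.eq_univ_of_forall fun y => (gaussianPDF_pos 0 one_ne_zero y).ne'
  rwa [hsupp, Measure.restrict_apply_univ]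

lemma Phi_pos (x : ℝ) : 0 < Phi x := by
  refine ENNReal.toReal_pos ?_ (measure_ne_top _ _)
  exact (gaussianReal_pos_of_volume_pos measurableSet_Iic (by simp)).ne'

lemma Phi_strictMono : StrictMono Phi := by
  intro a b hab
  have hsplit : gaussianReal 0 1 (Iic b)
      = gaussianReal 0 1 (Iic a) + gaussianReal 0 1 (Ioc a b) := by
    rw [← measure_union (by rw [Set.disjoint_left]; intro y hy hy2; exact absurd hy2.1 (not_lt.2 hy)) measurableSet_Ioc]
    rw [Set.Iic_union_Ioc_eq_Iic hab.le]
  have hpos : 0 < gaussianReal 0 1 (Ioc a b) :=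
    gaussianReal_pos_of_volume_pos measurableSet_Ioc
      (by rw [Real.volume_Ioc]; exact ENNReal.ofReal_pos.2 (by linarith))
  have hlt : gaussianReal 0 1 (Iic a) < gaussianReal 0 1 (Iic b) := by
    rw [hsplit]
    exact ENNReal.lt_add_right (measure_ne_top _ _) hpos.ne'
  exact ENNReal.toReal_strict_mono (measure_ne_top _ _) hlt

lemma gaussianPDF_le_one (x : ℝ) : ProbabilityTheory.gaussianPDF 0 1 x ≤ 1 := by
  rw [ProbabilityTheory.gaussianPDF]
  refine ENNReal.ofReal_le_one.2 ?_
  rw [gaussianPDFReal]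
  simp only [NNReal.coe_one, mul_one, sub_zero]
  have h1 : Real.exp (-x^2 / 2) ≤ 1 := by
    rw [Real.exp_le_one_iff]
    nlinarith [sq_nonneg x]
  have h2 : (Real.sqrt (2 * π))⁻¹ ≤ 1 := by
    apply inv_le_one_of_one_le₀
    rw [show (1:ℝ) = Real.sqrt 1 from (Real.sqrt_one).symm]
    apply Real.sqrt_le_sqrt
    nlinarith [Real.pi_gt_three]
  calc (Real.sqrt (2 * π))⁻¹ * Real.exp (-x^2 / 2) ≤ 1 * 1 :=
        mul_le_mul h2 h1 (Real.exp_nonneg _) zero_le_one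
    _ = 1 := by norm_num

lemma Phi_lipschitz : LipschitzWith 1 Phi := by
  apply LipschitzWith.of_dist_le_mul
  intro a b
  wlog hab : b ≤ a generalizing a b
  · rw [dist_comm, dist_comm a b]; exact this b a (le_of_not_ge hab)
  have hsplit : gaussianReal 0 1 (Iic a)
      = gaussianReal 0 1 (Iic b) + gaussianReal 0 1 (Ioc b a) := by
    rw [← measure_union (by rw [Set.disjoint_left]; intro y hy hy2; exact absurd hy2.1 (not_lt.2 hy)) measurableSet_Ioc]
    rw [Set.Iic_union_Ioc_eq_Iic hab]
  have hle : gaussianReal 0 1 (Ioc b a) ≤ ENNReal.ofReal (a - b) := by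
    rw [gaussianReal_of_var_ne_zero 0 one_ne_zero, withDensity_apply _ measurableSet_Ioc]
    calc ∫⁻ y in Ioc b a, ProbabilityTheory.gaussianPDF 0 1 y
        ≤ ∫⁻ _ in Ioc b a, 1 := setLIntegral_mono measurable_const fun y _ => gaussianPDF_le_one y
      _ = volume (Ioc b a) := by simp
      _ = ENNReal.ofReal (a - b) := by rw [Real.volume_Ioc]
  have hPhi : Phi a = Phi b + (gaussianReal 0 1 (Ioc b a)).toReal := by
    rw [Phi, Phi, hsplit, ENNReal.toReal_add (measure_ne_top _ _) (measure_ne_top _ _)]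
  have htr : (gaussianReal 0 1 (Ioc b a)).toReal ≤ a - b :=
    ENNReal.toReal_le_of_le_ofReal (by linarith) hle
  rw [Real.dist_eq, Real.dist_eq, hPhi]
  rw [add_sub_cancel_left]
  rw [abs_of_nonneg ENNReal.toReal_nonneg, NNReal.coe_one, one_mul]
  exact htr.trans (le_abs_self _)

lemma Phi_continuous : Continuous Phi := Phi_lipschitz.continuous

lemma Phi_tendsto_atTop : Tendsto Phi atTop (nhds 1) := by
  have h := tendsto_measure_Iic_atTop (μ := gaussianReal 0 1)
  rw [measure_univ] at h
  have := (ENNReal.tendsto_toReal (by norm_num : (1:ℝ≥0∞) ≠ ⊤)).comp h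
  exact this

lemma Phi_tendsto_atBot : Tendsto Phi atBot (nhds 0) := by
  have h := tendsto_measure_Ici_atBot (μ := gaussianReal 0 1)
  rw [measure_univ] at h
  have h1 : Tendsto (fun x : ℝ => (gaussianReal 0 1 (Ici x)).toReal) atBot (nhds 1) := by
    have := (ENNReal.tendsto_toReal (by norm_num : (1:ℝ≥0∞) ≠ ⊤)).comp h
    exact this
  have h2 : Tendsto (fun x : ℝ => (gaussianReal 0 1 (Ici (x+1))).toReal) atBot (nhds 1) :=
    h1.comp (tendsto_atBot_add_const_right _ 1 tendsto_id)
  have h3 : Tendsto (fun x : ℝ => 1 - (gaussianReal 0 1 (Ici (x+1))).toReal) atBot (nhds 0) := by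
    have := tendsto_const_nhds (x := (1:ℝ)) (f := atBot (α := ℝ)) |>.sub h2
    simpa using this
  refine tendsto_of_tendsto_of_tendsto_of_le_of_le tendsto_const_nhds h3
    (fun x => (Phi_pos x).le) (fun x => ?_)
  have hdisj : Disjoint (Iic x) (Ici (x+1)) := by
    rw [Set.disjoint_left]; intro y hy hy2
    simp only [mem_Iic] at hy
    simp only [mem_Ici] at hy2
    linarith
  have hle : gaussianReal 0 1 (Iic x) + gaussianReal 0 1 (Ici (x+1)) ≤ 1 := by
    rw [← measure_union hdisj measurableSet_Ici]
    exact prob_le_one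
  have := ENNReal.toReal_mono (by norm_num) hle
  rw [ENNReal.toReal_add (measure_ne_top _ _) (measure_ne_top _ _)] at this
  simp only [ENNReal.toReal_one] at this
  rw [Phi]
  linarith

lemma Phi_surj {p : ℝ} (hp : p ∈ Set.Ioo (0:ℝ) 1) : ∃ x, Phi x = p := by
  obtain ⟨a, ha⟩ := (Phi_tendsto_atBot.eventually_lt_const hp.1).exists
  obtain ⟨b, hb⟩ := (Phi_tendsto_atTop.eventually_const_lt hp.2).exists
  have hab : a ≤ b := by
    by_contra h
    exact absurd (Phi_mono (le_of_not_ge h)) (not_le.2 (ha.trans hb))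
  obtain ⟨x, _, hx⟩ := intermediate_value_Icc hab Phi_continuous.continuousOn
    ⟨ha.le, hb.le⟩
  exact ⟨x, hx⟩

lemma Phi_PhiInv {p : ℝ} (hp : p ∈ Set.Ioo (0:ℝ) 1) : Phi (PhiInv p) = p :=
  Function.invFun_eq (Phi_surj hp)

end PhiLemmas

section GaussScaling

lemma gaussianReal_neg_eq : (gaussianReal 0 1).map (fun y : ℝ => -1 * y) = gaussianReal 0 1 := by
  have h := gaussianReal_map_const_mul (μ := 0) (v := 1) (-1)
  simp only [mul_zero, neg_mul, one_mul] at h ⊢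
  convert h using 2
  ext
  norm_num

lemma gaussianReal_Ici_eq (x : ℝ) :
    (gaussianReal 0 1) (Set.Ici x) = ENNReal.ofReal (Phi (-x)) := by
  have h := gaussianReal_neg_eq
  have hpre : (fun y : ℝ => -1 * y) ⁻¹' (Set.Iic (-x)) = Set.Ici x := by
    ext y
    simp only [Set.mem_preimage, Set.mem_Iic, Set.mem_Ici, neg_mul, one_mul]
    constructor <;> intro hy <;> linarith
  calc (gaussianReal 0 1) (Set.Ici x)
      = (gaussianReal 0 1) ((fun y : ℝ => -1 * y) ⁻¹' (Set.Iic (-x))) := by rw [hpre]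
    _ = ((gaussianReal 0 1).map (fun y : ℝ => -1 * y)) (Set.Iic (-x)) := by
        rw [Measure.map_apply (by fun_prop) measurableSet_Iic]
    _ = ENNReal.ofReal (Phi (-x)) := by rw [h, gaussianReal_Iic_eq]

variable {σ : ℝ}

lemma gaussianReal_sigma_eq (hσ : 0 < σ) :
    gaussianReal 0 (NNReal.mk (σ^2) (sq_nonneg σ)) = (gaussianReal 0 1).map (fun y => σ * y) := by
  have h := gaussianReal_map_const_mul (μ := 0) (v := 1) σ
  rw [h]
  congr 1 <;> simp

lemma gaussianReal_sigma_Iic (hσ : 0 < σ) (t : ℝ) :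
    gaussianReal 0 (NNReal.mk (σ^2) (sq_nonneg σ)) (Set.Iic t) = ENNReal.ofReal (Phi (t / σ)) := by
  rw [gaussianReal_sigma_eq hσ, Measure.map_apply (by fun_prop) measurableSet_Iic]
  have : (fun y : ℝ => σ * y) ⁻¹' Set.Iic t = Set.Iic (t / σ) := by
    ext y
    simp only [Set.mem_preimage, Set.mem_Iic]
    rw [← le_div_iff₀' hσ]
  rw [this, gaussianReal_Iic_eq]

lemma gaussianReal_sigma_Ici (hσ : 0 < σ) (s : ℝ) :
    gaussianReal 0 (NNReal.mk (σ^2) (sq_nonneg σ)) (Set.Ici s) = ENNReal.ofReal (Phi (-(s / σ))) := by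
  rw [gaussianReal_sigma_eq hσ, Measure.map_apply (by fun_prop) measurableSet_Ici]
  have : (fun y : ℝ => σ * y) ⁻¹' Set.Ici s = Set.Ici (s / σ) := by
    ext y
    simp only [Set.mem_preimage, Set.mem_Ici]
    rw [← div_le_iff₀' hσ]
  rw [this, gaussianReal_Ici_eq]

end GaussScaling

section PiStuff

lemma lintegral_pi_prod : ∀ {n : ℕ} (g : Fin n → ℝ → ℝ≥0∞), (∀ i, Measurable (g i)) →
    ∫⁻ z, ∏ i, g i (z i) ∂(Measure.pi fun _ : Fin n => (volume : Measure ℝ))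
      = ∏ i, ∫⁻ t, g i t := by
  intro n
  induction n with
  | zero =>
      intro g _
      simp only [Finset.univ_eq_empty, Finset.prod_empty, lintegral_const, one_mul]
      rw [show (Set.univ : Set (Fin 0 → ℝ)) = Set.pi Set.univ (fun _ => Set.univ) by simp] 
      rw [Measure.pi_pi]
      simp
  | succ n ih =>
      intro g hg
      have hmp := measurePreserving_piFinSuccAbove (fun _ : Fin (n+1) => (volume : Measure ℝ)) 0
      set e := MeasurableEquiv.piFinSuccAbove (fun _ : Fin (n+1) => ℝ) 0 with he
      have hG : Measurable (fun p : ℝ × (Fin n → ℝ) =>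
          g 0 p.1 * ∏ j : Fin n, g j.succ (p.2 j)) := by
        apply Measurable.mul
        · exact (hg 0).comp measurable_fst
        · apply Finset.measurable_prod
          intro j _
          exact (hg j.succ).comp ((measurable_pi_apply j).comp measurable_snd)
      calc ∫⁻ z, ∏ i, g i (z i) ∂(Measure.pi fun _ : Fin (n+1) => (volume : Measure ℝ))
          = ∫⁻ z, (fun p : ℝ × (Fin n → ℝ) => g 0 p.1 * ∏ j : Fin n, g j.succ (p.2 j)) (e z)
              ∂(Measure.pi fun _ : Fin (n+1) => (volume : Measure ℝ)) := by
            congr 1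
            funext z
            rw [Fin.prod_univ_succ]
            simp [he, MeasurableEquiv.piFinSuccAbove_apply, Fin.succAbove_zero, Fin.tail]
        _ = ∫⁻ p, g 0 p.1 * ∏ j : Fin n, g j.succ (p.2 j)
              ∂((volume : Measure ℝ).prod (Measure.pi fun _ : Fin n => (volume : Measure ℝ))) := by
            rw [← hmp.lintegral_comp hG]
        _ = (∫⁻ t, g 0 t) * ∫⁻ w, ∏ j : Fin n, g j.succ (w j)
              ∂(Measure.pi fun _ : Fin n => (volume : Measure ℝ)) := by
            exact lintegral_prod_mul (f := g 0)
              (g := fun w : Fin n → ℝ => ∏ j : Fin n, g j.succ (w j)) (hg 0).aemeasurable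
              ((Finset.measurable_prod Finset.univ fun j _ =>
                (hg j.succ).comp (measurable_pi_apply j)).aemeasurable)
        _ = ∏ i, ∫⁻ t, g i t := by
            rw [ih (fun j => g j.succ) (fun j => hg j.succ), Fin.prod_univ_succ]

lemma setLintegral_pi_prod {n : ℕ} (g : Fin n → ℝ → ℝ≥0∞) (hg : ∀ i, Measurable (g i))
    {s : Fin n → Set ℝ} (hs : ∀ i, MeasurableSet (s i)) :
    ∫⁻ z in Set.pi Set.univ s, ∏ i, g i (z i)
        ∂(Measure.pi fun _ : Fin n => (volume : Measure ℝ))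
      = ∏ i, ∫⁻ t in s i, g i t := by
  rw [← lintegral_indicator (MeasurableSet.univ_pi hs)]
  have hind : ∀ z : Fin n → ℝ, (Set.pi Set.univ s).indicator (fun z => ∏ i, g i (z i)) z
      = ∏ i, (s i).indicator (g i) (z i) := by
    intro z
    by_cases hz : z ∈ Set.pi Set.univ s
    · rw [Set.indicator_of_mem hz]
      exact Finset.prod_congr rfl fun i _ =>
        (Set.indicator_of_mem (hz i (Set.mem_univ i)) _).symm
    · rw [Set.indicator_of_notMem hz]
      have hex : ∃ i, z i ∉ s i := by simpa [Set.mem_pi] using hz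
      obtain ⟨i, hi⟩ := hex
      symm
      apply Finset.prod_eq_zero (Finset.mem_univ i)
      rw [Set.indicator_of_notMem hi]
  calc ∫⁻ z, (Set.pi Set.univ s).indicator (fun z => ∏ i, g i (z i)) z
          ∂(Measure.pi fun _ : Fin n => (volume : Measure ℝ))
      = ∫⁻ z, ∏ i, (s i).indicator (g i) (z i)
          ∂(Measure.pi fun _ : Fin n => (volume : Measure ℝ)) :=
        lintegral_congr fun z => hind z
    _ = ∏ i, ∫⁻ t, (s i).indicator (g i) t :=
        lintegral_pi_prod _ (fun i => (hg i).indicator (hs i))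
    _ = ∏ i, ∫⁻ t in s i, g i t :=
        Finset.prod_congr rfl fun i _ => lintegral_indicator (hs i) _

end PiStuff

section MeasureMachinery

lemma pi_gaussian_eq {n : ℕ} {v : ℝ≥0} (hv : v ≠ 0) :
    Measure.pi (fun _ : Fin n => gaussianReal 0 v)
      = (Measure.pi fun _ : Fin n => (volume : Measure ℝ)).withDensity
          (fun z => ∏ i, ProbabilityTheory.gaussianPDF 0 v (z i)) := by
  refine Measure.pi_eq fun s hs => ?_
  rw [withDensity_apply _ (MeasurableSet.univ_pi hs)]
  rw [setLintegral_pi_prod (fun _ => ProbabilityTheory.gaussianPDF 0 v)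
    (fun _ => measurable_gaussianPDF 0 v) hs]
  exact Finset.prod_congr rfl fun i _ => by
    rw [gaussianReal_of_var_ne_zero 0 hv, withDensity_apply _ (hs i)]

lemma map_withDensity_equiv {α β : Type*} [MeasurableSpace α] [MeasurableSpace β]
    (e : α ≃ᵐ β) (μ : Measure α) {f : α → ℝ≥0∞} (hf : Measurable f) :
    Measure.map e (μ.withDensity f) = (Measure.map e μ).withDensity (f ∘ e.symm) := by
  ext s hs
  rw [Measure.map_apply e.measurable hs, withDensity_apply _ (e.measurable hs),
    withDensity_apply _ hs, Measure.restrict_map e.measurable hs,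
    lintegral_map (hf.comp e.symm.measurable) e.measurable]
  apply lintegral_congr
  intro a
  simp

lemma map_eval_pi {n : ℕ} (P : Measure ℝ) [IsProbabilityMeasure P] (i : Fin n) :
    (Measure.pi fun _ : Fin n => P).map (fun z => z i) = P := by
  ext s hs
  rw [Measure.map_apply (measurable_pi_apply i) hs]
  have hpre : (fun z : Fin n → ℝ => z i) ⁻¹' s
      = Set.pi Set.univ (Function.update (fun _ => Set.univ) i s) := by
    ext z
    simp only [Set.mem_preimage, Set.mem_pi, Set.mem_univ, forall_true_left]
    constructor
    · intro h j
      rcases eq_or_ne j i with rfl | hj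
      · rwa [Function.update_self]
      · rw [Function.update_of_ne hj]; exact Set.mem_univ _
    · intro h
      have := h i
      rwa [Function.update_self] at this
  rw [hpre, Measure.pi_pi]
  rw [Finset.prod_eq_single i (fun j _ hj => by
    rw [Function.update_of_ne hj]; exact measure_univ)
    (fun h => absurd (Finset.mem_univ i) h)]
  rw [Function.update_self]

lemma np_lemma {α : Type*} [MeasurableSpace α] (ν : Measure α) [IsFiniteMeasure ν]
    {A G : Set α} (hA : MeasurableSet A) (hG : MeasurableSet G)
    {R : α → ℝ≥0∞} {R₀ : ℝ≥0∞}
    (h1 : ∀ z ∈ A \ G, R z ≤ R₀) (h2 : ∀ z ∈ G \ A, R₀ ≤ R z)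
    (hm : ν A ≤ ν G) :
    ∫⁻ z in A, R z ∂ν ≤ ∫⁻ z in G, R z ∂ν := by
  have hAsplit : ν A = ν (A ∩ G) + ν (A \ G) := by
    rw [← measure_union (Set.disjoint_of_subset_left Set.inter_subset_right
      Set.disjoint_sdiff_right) (hA.diff hG), Set.inter_union_diff]
  have hGsplit : ν G = ν (G ∩ A) + ν (G \ A) := by
    rw [← measure_union (Set.disjoint_of_subset_left Set.inter_subset_right
      Set.disjoint_sdiff_right) (hG.diff hA), Set.inter_union_diff]
  have hmm : ν (A \ G) ≤ ν (G \ A) := by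
    rw [hAsplit, hGsplit, Set.inter_comm A G] at hm
    exact ENNReal.add_le_add_iff_left (measure_ne_top _ _) |>.1 hm
  have key : ∫⁻ z in A \ G, R z ∂ν ≤ ∫⁻ z in G \ A, R z ∂ν := by
    calc ∫⁻ z in A \ G, R z ∂ν ≤ ∫⁻ _ in A \ G, R₀ ∂ν :=
          setLIntegral_mono' (hA.diff hG) h1
      _ = R₀ * ν (A \ G) := by rw [setLIntegral_const]
      _ ≤ R₀ * ν (G \ A) := mul_le_mul_right hmm R₀
      _ = ∫⁻ _ in G \ A, R₀ ∂ν := by rw [setLIntegral_const]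
      _ ≤ ∫⁻ z in G \ A, R z ∂ν := setLIntegral_mono' (hG.diff hA) h2
  calc ∫⁻ z in A, R z ∂ν
      = ∫⁻ z in A ∩ G, R z ∂ν + ∫⁻ z in A \ G, R z ∂ν := by
        rw [← lintegral_union (hA.diff hG) (Set.disjoint_of_subset_left Set.inter_subset_right
          Set.disjoint_sdiff_right), Set.inter_union_diff]
    _ ≤ ∫⁻ z in A ∩ G, R z ∂ν + ∫⁻ z in G \ A, R z ∂ν := add_le_add_right key _
    _ = ∫⁻ z in G ∩ A, R z ∂ν + ∫⁻ z in G \ A, R z ∂ν := by rw [Set.inter_comm]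
    _ = ∫⁻ z in G, R z ∂ν := by
        rw [← lintegral_union (hG.diff hA) (Set.disjoint_of_subset_left Set.inter_subset_right
          Set.disjoint_sdiff_right), Set.inter_union_diff]



end MeasureMachinery

section PDF

variable {m : ℕ} {σ : ℝ}

lemma norm_sq_eq (z : EuclideanSpace ℝ (Fin m)) : ‖z‖^2 = ∑ i, (z i)^2 := by
  rw [EuclideanSpace.norm_eq]
  rw [Real.sq_sqrt (Finset.sum_nonneg fun i _ => sq_nonneg _)]
  exact Finset.sum_congr rfl fun i _ => by rw [Real.norm_eq_abs, sq_abs]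

lemma gaussianPDF_eq_norm (hσ : 0 < σ) (z : EuclideanSpace ℝ (Fin m)) :
    gaussianPDF 0 (σ ^ 2 • (1 : Matrix (Fin m) (Fin m) ℝ)) z
      = (2 * Real.pi) ^ (-(m : ℝ) / 2) * ((σ ^ 2) ^ m : ℝ) ^ (-(1 : ℝ) / 2)
        * Real.exp (-(1 / 2) * ((σ ^ 2)⁻¹ * ‖z‖ ^ 2)) := by
  have hσ2 : (σ:ℝ)^2 ≠ 0 := pow_ne_zero 2 hσ.ne'
  have hdet : (σ ^ 2 • (1 : Matrix (Fin m) (Fin m) ℝ)).det = (σ ^ 2) ^ m := by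
    rw [Matrix.det_smul, Matrix.det_one, mul_one]
    simp
  have hinv : (σ ^ 2 • (1 : Matrix (Fin m) (Fin m) ℝ))⁻¹ = (σ ^ 2)⁻¹ • 1 := by
    apply Matrix.inv_eq_right_inv
    rw [Matrix.smul_mul, Matrix.mul_smul, Matrix.one_mul, smul_smul, mul_inv_cancel₀ hσ2,
      one_smul]
  simp only [_root_.gaussianPDF]
  rw [hdet, hinv]
  congr 1
  have hz0 : (fun i => z i - (0 : EuclideanSpace ℝ (Fin m)) i) = fun i => z i := by
    funext i; simp
  rw [hz0]
  congr 1
  rw [Matrix.smul_mulVec, Matrix.one_mulVec, dotProduct_smul, norm_sq_eq]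
  rw [smul_eq_mul]
  congr 1
  rw [dotProduct]
  congr 1
  exact Finset.sum_congr rfl fun i _ => (sq (z i)).symm

lemma gaussianPDF_eq_prod (hσ : 0 < σ) (z : EuclideanSpace ℝ (Fin m)) :
    ENNReal.ofReal (gaussianPDF 0 (σ ^ 2 • (1 : Matrix (Fin m) (Fin m) ℝ)) z)
      = ∏ i, ProbabilityTheory.gaussianPDF 0 (NNReal.mk (σ ^ 2) (sq_nonneg σ)) (z i) := by
  have hσ2 : (0:ℝ) < σ^2 := by positivity
  have h2π : (0:ℝ) < 2 * Real.pi := by positivity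
  rw [gaussianPDF_eq_norm hσ]
  rw [ProbabilityTheory.gaussianPDF_def]
  rw [← ENNReal.ofReal_prod_of_nonneg (fun i _ => gaussianPDFReal_nonneg _ _ _)]
  congr 1
  have hconst : ∀ i : Fin m, gaussianPDFReal 0 (NNReal.mk (σ ^ 2) (sq_nonneg σ) : ℝ≥0) (z i)
      = (Real.sqrt (2 * Real.pi * σ^2))⁻¹ * Real.exp (-(z i)^2 / (2 * σ^2)) := by
    intro i
    rw [ProbabilityTheory.gaussianPDFReal]
    norm_num
  rw [Finset.prod_congr rfl fun i _ => hconst i]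
  rw [Finset.prod_mul_distrib, Finset.prod_const, ← Real.exp_sum]
  have hcard : (Finset.univ : Finset (Fin m)).card = m := by simp
  rw [hcard]
  congr 1
  · -- constants
    rw [Real.sqrt_eq_rpow, ← Real.rpow_neg_one ((2 * Real.pi * σ^2) ^ ((1:ℝ)/2)),
      ← Real.rpow_natCast (((2 * Real.pi * σ^2) ^ ((1:ℝ)/2)) ^ (-1:ℝ)) m,
      ← Real.rpow_mul (by positivity), ← Real.rpow_mul (by positivity),
      Real.mul_rpow h2π.le hσ2.le]
    rw [← Real.rpow_natCast (σ^2) m, ← Real.rpow_mul hσ2.le]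
    congr 1 <;> ring
  · -- exponents
    rw [norm_sq_eq, Finset.mul_sum, Finset.mul_sum]
    congr 1
    exact Finset.sum_congr rfl fun i _ => by ring

end PDF

section Nu

variable {m : ℕ} {σ : ℝ}

lemma gaussianPDF_measurable (hσ : 0 < σ) :
    Measurable (fun z : EuclideanSpace ℝ (Fin m) =>
      ENNReal.ofReal (gaussianPDF 0 (σ ^ 2 • (1 : Matrix (Fin m) (Fin m) ℝ)) z)) := by
  have : Continuous (fun z : EuclideanSpace ℝ (Fin m) =>
      gaussianPDF 0 (σ ^ 2 • (1 : Matrix (Fin m) (Fin m) ℝ)) z) := by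
    simp only [gaussianPDF_eq_norm hσ]
    fun_prop
  exact this.measurable.ennreal_ofReal

lemma map_gaussianMeasure_equiv (hσ : 0 < σ) :
    Measure.map ((MeasurableEquiv.toLp 2 (Fin m → ℝ)).symm)
        (gaussianMeasure 0 (σ ^ 2 • (1 : Matrix (Fin m) (Fin m) ℝ)))
      = Measure.pi (fun _ : Fin m => gaussianReal 0 (NNReal.mk (σ ^ 2) (sq_nonneg σ))) := by
  have hv : (NNReal.mk (σ ^ 2) (sq_nonneg σ) : ℝ≥0) ≠ 0 := by
    intro h
    rw [← NNReal.coe_inj] at h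
    exact (pow_ne_zero 2 hσ.ne') (by simpa using h)
  rw [gaussianMeasure, map_withDensity_equiv _ _ (gaussianPDF_measurable hσ),
    (EuclideanSpace.volume_preserving_symm_measurableEquiv_toLp (Fin m)).map_eq,
    pi_gaussian_eq hv]
  congr 1
  funext w
  rw [Function.comp_apply, gaussianPDF_eq_prod hσ]
  rfl

lemma gaussianMeasure_isProb (hσ : 0 < σ) :
    IsProbabilityMeasure (gaussianMeasure (0 : EuclideanSpace ℝ (Fin m))
      (σ ^ 2 • (1 : Matrix (Fin m) (Fin m) ℝ))) := by
  constructor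
  have h := map_gaussianMeasure_equiv (m := m) hσ
  have : (Measure.map ((MeasurableEquiv.toLp 2 (Fin m → ℝ)).symm)
      (gaussianMeasure 0 (σ ^ 2 • (1 : Matrix (Fin m) (Fin m) ℝ)))) Set.univ = 1 := by
    rw [h]; exact measure_univ
  rwa [Measure.map_apply ((MeasurableEquiv.toLp 2 (Fin m → ℝ)).symm).measurable
    MeasurableSet.univ, Set.preimage_univ] at this

lemma gaussianMeasure_rot_inv (hσ : 0 < σ)
    (R : EuclideanSpace ℝ (Fin m) ≃ₗᵢ[ℝ] EuclideanSpace ℝ (Fin m)) :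
    Measure.map R (gaussianMeasure 0 (σ ^ 2 • (1 : Matrix (Fin m) (Fin m) ℝ)))
      = gaussianMeasure 0 (σ ^ 2 • (1 : Matrix (Fin m) (Fin m) ℝ)) := by
  have hcoe : (⇑R : EuclideanSpace ℝ (Fin m) → EuclideanSpace ℝ (Fin m))
      = ⇑(R.toHomeomorph.toMeasurableEquiv) := rfl
  rw [gaussianMeasure, hcoe, map_withDensity_equiv _ _ (gaussianPDF_measurable hσ)]
  rw [← hcoe, R.measurePreserving.map_eq]
  congr 1
  funext w
  rw [Function.comp_apply]
  congr 1
  rw [gaussianPDF_eq_norm hσ, gaussianPDF_eq_norm hσ]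
  congr 3
  have : R.toHomeomorph.toMeasurableEquiv.symm w = R.symm w := rfl
  rw [this, LinearIsometryEquiv.norm_map]

lemma map_inner_gaussian (hσ : 0 < σ) (u : EuclideanSpace ℝ (Fin m)) (hu : ‖u‖ = 1) :
    Measure.map (fun z => @inner ℝ _ _ z u)
        (gaussianMeasure 0 (σ ^ 2 • (1 : Matrix (Fin m) (Fin m) ℝ)))
      = gaussianReal 0 (NNReal.mk (σ ^ 2) (sq_nonneg σ)) := by
  haveI := gaussianMeasure_isProb (m := m) hσ
  have hm : m ≠ 0 := by
    rintro rfl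
    have : u = 0 := Subsingleton.elim u 0
    rw [this, norm_zero] at hu
    exact one_ne_zero hu.symm
  have i0 : Fin m := ⟨0, Nat.pos_of_ne_zero hm⟩
  -- orthonormal basis with b i0 = u
  have hON : Orthonormal ℝ (Set.restrict {i0} (fun _ : Fin m => u)) := by
    constructor
    · intro i; exact hu
    · intro i j hij
      exact absurd (Subtype.ext ((Set.mem_singleton_iff.1 i.2).trans
        (Set.mem_singleton_iff.1 j.2).symm)) hij
  obtain ⟨b, hb⟩ := hON.exists_orthonormalBasis_extension_of_card_eq
    (by simp [finrank_euclideanSpace_fin]) 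
  have hbu : b i0 = u := hb i0 rfl
  -- inner z u = (b.repr z) i0
  have hinner : ∀ z : EuclideanSpace ℝ (Fin m),
      @inner ℝ _ _ z u = b.repr z i0 := by
    intro z
    rw [← hbu]
    rw [← b.repr.inner_map_map z (b i0), b.repr_self]
    simp [EuclideanSpace.inner_single_right]
  have hmeas_repr : Measurable (⇑b.repr) := b.repr.continuous.measurable
  have hev : Measurable (fun w : EuclideanSpace ℝ (Fin m) => w i0) :=
    (measurable_pi_apply i0).comp ((MeasurableEquiv.toLp 2 (Fin m → ℝ)).symm).measurable
  calc Measure.map (fun z => @inner ℝ _ _ z u)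
        (gaussianMeasure 0 (σ ^ 2 • (1 : Matrix (Fin m) (Fin m) ℝ)))
      = Measure.map ((fun w : EuclideanSpace ℝ (Fin m) => w i0) ∘ ⇑b.repr)
        (gaussianMeasure 0 (σ ^ 2 • (1 : Matrix (Fin m) (Fin m) ℝ))) := by
        congr 1
        funext z
        rw [Function.comp_apply, hinner z]
    _ = Measure.map (fun w : EuclideanSpace ℝ (Fin m) => w i0)
          (Measure.map (⇑b.repr)
            (gaussianMeasure 0 (σ ^ 2 • (1 : Matrix (Fin m) (Fin m) ℝ)))) := by
        exact (Measure.map_map hev hmeas_repr).symm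
    _ = Measure.map (fun w : EuclideanSpace ℝ (Fin m) => w i0)
          (gaussianMeasure 0 (σ ^ 2 • (1 : Matrix (Fin m) (Fin m) ℝ))) := by
        rw [gaussianMeasure_rot_inv hσ b.repr]
    _ = gaussianReal 0 (NNReal.mk (σ ^ 2) (sq_nonneg σ)) := by
        have hcomp : (fun w : EuclideanSpace ℝ (Fin m) => w i0)
            = (fun w : Fin m → ℝ => w i0) ∘ ⇑((MeasurableEquiv.toLp 2 (Fin m → ℝ)).symm) := rfl
        rw [hcomp, ← Measure.map_map (measurable_pi_apply i0)
          ((MeasurableEquiv.toLp 2 (Fin m → ℝ)).symm).measurable]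
        rw [map_gaussianMeasure_equiv hσ, map_eval_pi]

end Nu

section Shift

variable {m : ℕ} {σ : ℝ}

lemma map_add_gaussianMeasure (hσ : 0 < σ) (δ : EuclideanSpace ℝ (Fin m)) :
    Measure.map (fun z => δ + z)
        (gaussianMeasure 0 (σ ^ 2 • (1 : Matrix (Fin m) (Fin m) ℝ)))
      = (gaussianMeasure 0 (σ ^ 2 • (1 : Matrix (Fin m) (Fin m) ℝ))).withDensity
          (fun z => ENNReal.ofReal (Real.exp ((σ ^ 2)⁻¹ * (⟪z, δ⟫ - ‖δ‖ ^ 2 / 2)))) := by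
  have hR : Measurable (fun z : EuclideanSpace ℝ (Fin m) =>
      ENNReal.ofReal (Real.exp ((σ ^ 2)⁻¹ * (⟪z, δ⟫ - ‖δ‖ ^ 2 / 2)))) := by
    apply Measurable.ennreal_ofReal
    exact (Real.continuous_exp.comp (continuous_const.mul
      ((continuous_id.inner continuous_const).sub continuous_const))).measurable
  set e : EuclideanSpace ℝ (Fin m) ≃ᵐ EuclideanSpace ℝ (Fin m) :=
    (Homeomorph.addLeft δ).toMeasurableEquiv with he
  have hcoe : (fun z : EuclideanSpace ℝ (Fin m) => δ + z) = ⇑e := rfl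
  rw [gaussianMeasure, hcoe, map_withDensity_equiv e _ (gaussianPDF_measurable hσ)]
  have hvol : Measure.map (⇑e) volume = volume := by
    rw [← hcoe]
    exact (measurePreserving_add_left volume δ).map_eq
  rw [hvol, ← withDensity_mul volume (gaussianPDF_measurable hσ) hR]
  congr 1
  funext w
  have hsymm : e.symm w = w - δ := by
    rw [he]
    show (Homeomorph.addLeft δ).symm w = w - δ
    simp [Homeomorph.addLeft, sub_eq_neg_add]
  rw [Function.comp_apply, hsymm, Pi.mul_apply]
  beta_reduce
  rw [gaussianPDF_eq_norm hσ, gaussianPDF_eq_norm hσ]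
  rw [← ENNReal.ofReal_mul (by positivity)]
  congr 1
  have hns : ‖w - δ‖ ^ 2 = ‖w‖ ^ 2 - 2 * ⟪w, δ⟫ + ‖δ‖ ^ 2 := norm_sub_sq_real w δ
  have hE : -(1/2 : ℝ) * ((σ^2)⁻¹ * ‖w - δ‖^2)
      = -(1/2) * ((σ^2)⁻¹ * ‖w‖^2) + (σ^2)⁻¹ * (⟪w, δ⟫ - ‖δ‖^2/2) := by
    rw [hns]
    field_simp
    ring
  rw [hE, Real.exp_add]
  ring

end Shift

/-- The original randomized smoothing certificate (Cohen et al.)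
for additive isotropic Gaussian noise. -/
theorem smoothing_additive_noise
    {m : ℕ} {Y : Type*} [Fintype Y]
    (x : EuclideanSpace ℝ (Fin m)) (f : EuclideanSpace ℝ (Fin m) → Y)
    (hmeas : ∀ c : Y, MeasurableSet {ε : EuclideanSpace ℝ (Fin m) | f (x + ε) = c})
    (σ : ℝ) (hσ : 0 < σ)
    (pA pB : ℝ) (hpA : pA ∈ Set.Ioo (0 : ℝ) 1) (hpB : pB ∈ Set.Ioo (0 : ℝ) 1)
    (cA : Y)
    (hA : pA ≤ (gaussianMeasure 0 (σ ^ 2 • (1 : Matrix (Fin m) (Fin m) ℝ))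
            {ε | f (x + ε) = cA}).toReal)
    (hAB : pB ≤ pA)
    (hB : ∀ c : Y, c ≠ cA →
        (gaussianMeasure 0 (σ ^ 2 • (1 : Matrix (Fin m) (Fin m) ℝ))
            {ε | f (x + ε) = c}).toReal ≤ pB) :
    ∀ δ : EuclideanSpace ℝ (Fin m), ‖δ‖ < σ / 2 * (PhiInv pA - PhiInv pB) →
      ∀ cB : Y, cB ≠ cA →
        gaussianMeasure 0 (σ ^ 2 • (1 : Matrix (Fin m) (Fin m) ℝ))
            {ε | f (x + δ + ε) = cB}
          < gaussianMeasure 0 (σ ^ 2 • (1 : Matrix (Fin m) (Fin m) ℝ))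
            {ε | f (x + δ + ε) = cA} := by
  intro δ hδ cB hcB
  set ν := gaussianMeasure 0 (σ ^ 2 • (1 : Matrix (Fin m) (Fin m) ℝ)) with hν
  haveI : IsProbabilityMeasure ν := gaussianMeasure_isProb hσ
  set c₁ := PhiInv pA with hc₁
  set c₂ := PhiInv pB with hc₂
  set A := {ε : EuclideanSpace ℝ (Fin m) | f (x + ε) = cA} with hA'
  set B := {ε : EuclideanSpace ℝ (Fin m) | f (x + ε) = cB} with hB'
  have hAm : MeasurableSet A := hmeas cA
  have hBm : MeasurableSet B := hmeas cB
  have hνA : ENNReal.ofReal pA ≤ ν A := by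
    rw [← ENNReal.ofReal_toReal (measure_ne_top ν A)]
    exact ENNReal.ofReal_le_ofReal hA
  have hνB : ν B ≤ ENNReal.ofReal pB := by
    rw [← ENNReal.ofReal_toReal (measure_ne_top ν B)]
    exact ENNReal.ofReal_le_ofReal (hB cB hcB)
  by_cases hδ0 : δ = 0
  · subst hδ0
    have hc12 : c₂ < c₁ := by
      rw [norm_zero] at hδ
      nlinarith
    have hpBA : pB < pA := by
      rw [← Phi_PhiInv hpA, ← Phi_PhiInv hpB]
      exact Phi_strictMono hc12
    have hsetB : {ε : EuclideanSpace ℝ (Fin m) | f (x + 0 + ε) = cB} = B := by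
      simp only [add_zero, hB']
    have hsetA : {ε : EuclideanSpace ℝ (Fin m) | f (x + 0 + ε) = cA} = A := by
      simp only [add_zero, hA']
    rw [hsetB, hsetA]
    calc ν B ≤ ENNReal.ofReal pB := hνB
      _ < ENNReal.ofReal pA := by
          rw [ENNReal.ofReal_lt_ofReal_iff hpA.1]
          exact hpBA
      _ ≤ ν A := hνA
  · -- main case
    have hδn : 0 < ‖δ‖ := norm_pos_iff.2 hδ0
    have hc : c₂ + ‖δ‖ / σ < c₁ - ‖δ‖ / σ := by
      have h2 : 2 * ‖δ‖ < σ * (c₁ - c₂) := by nlinarith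
      have h3 : ‖δ‖ / σ < (c₁ - c₂) / 2 := by
        rw [div_lt_div_iff₀ hσ two_pos]
        linarith
      linarith [h3]
    set u : EuclideanSpace ℝ (Fin m) := ‖δ‖⁻¹ • δ with hu'
    have hu : ‖u‖ = 1 := by
      rw [hu', norm_smul, norm_inv, norm_norm, inv_mul_cancel₀ hδn.ne']
    set L : EuclideanSpace ℝ (Fin m) → ℝ := fun z => ⟪z, u⟫ with hL'
    have hLcont : Continuous L := by
      apply Continuous.inner continuous_id continuous_const
    have hLm : Measurable L := hLcont.measurable
    have hLadd : ∀ z w, L (z + w) = L z + L w := fun z w => inner_add_left z w u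
    have hLδ : L δ = ‖δ‖ := by
      show ⟪δ, ‖δ‖⁻¹ • δ⟫ = ‖δ‖
      rw [real_inner_smul_right, real_inner_self_eq_norm_sq, sq]
      field_simp
    have hinnerδ : ∀ z, ⟪z, δ⟫ = ‖δ‖ * L z := by
      intro z
      show ⟪z, δ⟫ = ‖δ‖ * ⟪z, ‖δ‖⁻¹ • δ⟫
      rw [real_inner_smul_right]
      field_simp
    -- the density ratio
    set R : EuclideanSpace ℝ (Fin m) → ℝ≥0∞ :=
      fun z => ENNReal.ofReal (Real.exp ((σ ^ 2)⁻¹ * (⟪z, δ⟫ - ‖δ‖ ^ 2 / 2))) with hR'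
    have hRm : Measurable R := by
      apply Measurable.ennreal_ofReal
      exact (Real.continuous_exp.comp (continuous_const.mul
        ((continuous_id.inner continuous_const).sub continuous_const))).measurable
    have hmap : Measure.map (fun z => δ + z) ν = ν.withDensity R :=
      map_add_gaussianMeasure hσ δ
    have haddm : Measurable (fun z : EuclideanSpace ℝ (Fin m) => δ + z) :=
      measurable_const_add δ
    -- expressing the shifted measures
    have hshift : ∀ (c : Y), MeasurableSet {ε : EuclideanSpace ℝ (Fin m) | f (x + ε) = c} →
        ν {ε | f (x + δ + ε) = c} = ∫⁻ z in {ε | f (x + ε) = c}, R z ∂ν := by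
      intro c hc'
      have hpre : {ε : EuclideanSpace ℝ (Fin m) | f (x + δ + ε) = c}
          = (fun z => δ + z) ⁻¹' {ε | f (x + ε) = c} := by
        ext ε
        simp only [Set.mem_setOf_eq, Set.mem_preimage, add_assoc]
      rw [hpre, ← Measure.map_apply haddm hc', hmap, withDensity_apply _ hc']
    -- half space measures
    have hhalf_le : ∀ t : ℝ, ν {z | L z ≤ t} = ENNReal.ofReal (Phi (t / σ)) := by
      intro t
      have : {z : EuclideanSpace ℝ (Fin m) | L z ≤ t} = L ⁻¹' (Set.Iic t) := rfl
      rw [this, ← Measure.map_apply hLm measurableSet_Iic, hL',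
        map_inner_gaussian hσ u hu, gaussianReal_sigma_Iic hσ]
    have hhalf_ge : ∀ t : ℝ, ν {z | t ≤ L z} = ENNReal.ofReal (Phi (-(t / σ))) := by
      intro t
      have : {z : EuclideanSpace ℝ (Fin m) | t ≤ L z} = L ⁻¹' (Set.Ici t) := rfl
      rw [this, ← Measure.map_apply hLm measurableSet_Ici, hL',
        map_inner_gaussian hσ u hu, gaussianReal_sigma_Ici hσ]
    set H := {z : EuclideanSpace ℝ (Fin m) | L z ≤ σ * c₁} with hH'
    set G := {z : EuclideanSpace ℝ (Fin m) | -(σ * c₂) ≤ L z} with hG'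
    have hHm : MeasurableSet H := measurableSet_le hLm measurable_const
    have hGm : MeasurableSet G := measurableSet_le measurable_const hLm
    -- ν of half spaces
    have hνH : ν H = ENNReal.ofReal pA := by
      rw [hH', hhalf_le, mul_div_cancel_left₀ c₁ hσ.ne', Phi_PhiInv hpA]
    have hνG : ν G = ENNReal.ofReal pB := by
      rw [hG', hhalf_ge]
      rw [show -(-(σ * c₂) / σ) = c₂ by
        rw [neg_div, neg_neg, mul_div_cancel_left₀ c₂ hσ.ne']]
      rw [Phi_PhiInv hpB]
    -- shifted measures of half spaces
    have hμH : ∫⁻ z in H, R z ∂ν = ENNReal.ofReal (Phi (c₁ - ‖δ‖ / σ)) := by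
      have h1 : (fun z => δ + z) ⁻¹' H = {z | L z ≤ σ * c₁ - ‖δ‖} := by
        ext z
        simp only [Set.mem_preimage, hH', Set.mem_setOf_eq, hLadd, hLδ]
        constructor <;> intro h <;> linarith
      rw [← withDensity_apply _ hHm, ← hmap, Measure.map_apply haddm hHm, h1, hhalf_le]
      rw [sub_div, mul_div_cancel_left₀ c₁ hσ.ne']
    have hμG : ∫⁻ z in G, R z ∂ν = ENNReal.ofReal (Phi (c₂ + ‖δ‖ / σ)) := by
      have h1 : (fun z => δ + z) ⁻¹' G = {z | -(σ * c₂) - ‖δ‖ ≤ L z} := by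
        ext z
        simp only [Set.mem_preimage, hG', Set.mem_setOf_eq, hLadd, hLδ]
        constructor <;> intro h <;> linarith
      rw [← withDensity_apply _ hGm, ← hmap, Measure.map_apply haddm hGm, h1, hhalf_ge]
      rw [sub_div, neg_div, mul_div_cancel_left₀ c₂ hσ.ne']
      congr 2
      ring
    -- Neyman-Pearson comparisons
    have hσ2 : (0:ℝ) < (σ ^ 2)⁻¹ := by positivity
    have hNP_A : ∫⁻ z in H, R z ∂ν ≤ ∫⁻ z in A, R z ∂ν := by
      apply np_lemma ν hHm hAm
        (R₀ := ENNReal.ofReal (Real.exp ((σ ^ 2)⁻¹ * (‖δ‖ * (σ * c₁) - ‖δ‖ ^ 2 / 2))))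
      · intro z hz
        simp only [hR']
        rw [hinnerδ]
        apply ENNReal.ofReal_le_ofReal
        apply Real.exp_le_exp.2
        have hzH : L z ≤ σ * c₁ := hz.1
        rw [mul_sub, mul_sub]
        apply sub_le_sub_right
        exact mul_le_mul_of_nonneg_left (mul_le_mul_of_nonneg_left hzH hδn.le) hσ2.le
      · intro z hz
        simp only [hR']
        rw [hinnerδ]
        apply ENNReal.ofReal_le_ofReal
        apply Real.exp_le_exp.2
        have hzH : ¬ (L z ≤ σ * c₁) := hz.2
        push_neg at hzH
        rw [mul_sub, mul_sub]
        apply sub_le_sub_right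
        exact mul_le_mul_of_nonneg_left (mul_le_mul_of_nonneg_left hzH.le hδn.le) hσ2.le
      · rw [hνH]; exact hνA
    have hNP_B : ∫⁻ z in B, R z ∂ν ≤ ∫⁻ z in G, R z ∂ν := by
      apply np_lemma ν hBm hGm
        (R₀ := ENNReal.ofReal (Real.exp ((σ ^ 2)⁻¹ * (‖δ‖ * (-(σ * c₂)) - ‖δ‖ ^ 2 / 2))))
      · intro z hz
        simp only [hR']
        rw [hinnerδ]
        apply ENNReal.ofReal_le_ofReal
        apply Real.exp_le_exp.2
        have hzG : ¬ (-(σ * c₂) ≤ L z) := hz.2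
        push_neg at hzG
        rw [mul_sub, mul_sub]
        apply sub_le_sub_right
        exact mul_le_mul_of_nonneg_left (mul_le_mul_of_nonneg_left hzG.le hδn.le) hσ2.le
      · intro z hz
        simp only [hR']
        rw [hinnerδ]
        apply ENNReal.ofReal_le_ofReal
        apply Real.exp_le_exp.2
        have hzG : -(σ * c₂) ≤ L z := hz.1
        rw [mul_sub, mul_sub]
        apply sub_le_sub_right
        exact mul_le_mul_of_nonneg_left (mul_le_mul_of_nonneg_left hzG hδn.le) hσ2.le
      · rw [hνG]; exact hνB
    -- conclusion
    rw [hshift cB hBm, hshift cA hAm]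
    calc ∫⁻ z in B, R z ∂ν ≤ ∫⁻ z in G, R z ∂ν := hNP_B
      _ = ENNReal.ofReal (Phi (c₂ + ‖δ‖ / σ)) := hμG
      _ < ENNReal.ofReal (Phi (c₁ - ‖δ‖ / σ)) := by
          rw [ENNReal.ofReal_lt_ofReal_iff (Phi_pos _)]
          exact Phi_strictMono hc
      _ = ∫⁻ z in H, R z ∂ν := hμH.symm
      _ ≤ ∫⁻ z in A, R z ∂ν := hNP_A
end

section
/- Let Σ ∈ ℝ^{d×d} be a symmetric positive-definite matrix, γ ∈ ℝ^d with γ ≠ 0, p ∈ (0,1), and A := { z ∈ ℝ^d : γᵀ Σ⁻¹ z ≤ √(γᵀ Σ⁻¹ γ) · Φ⁻¹(p) }. Then for every measurable set S ⊆ ℝ^d with N(0,Σ)(S) ≥ N(0,Σ)(A), it holds that N(γ,Σ)(S) ≥ N(γ,Σ)(A); equivalently, for β ~ N(0,Σ), if P(β ∈ S) ≥ P(β ∈ A) then P(β + γ ∈ S) ≥ P(β + γ ∈ A). -/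
open MeasureTheory ProbabilityTheory Matrix Set

section aux

variable {d : ℕ}

private lemma contLinNP (M : Matrix (Fin d) (Fin d) ℝ) (γ : EuclideanSpace ℝ (Fin d)) :
    Continuous fun z : EuclideanSpace ℝ (Fin d) =>
      (fun i => γ i) ⬝ᵥ (M *ᵥ fun i => z i) := by
  have h : ∀ i, Continuous fun z : EuclideanSpace ℝ (Fin d) => z i :=
    fun i => (EuclideanSpace.proj i).continuous
  simp only [dotProduct, Matrix.mulVec]
  exact continuous_finset_sum _ fun i _ => continuous_const.mul
    (continuous_finset_sum _ fun j _ => continuous_const.mul (h j))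

private lemma contQuadNP (M : Matrix (Fin d) (Fin d) ℝ) (μ : EuclideanSpace ℝ (Fin d)) :
    Continuous fun z : EuclideanSpace ℝ (Fin d) =>
      (fun i => z i - μ i) ⬝ᵥ (M *ᵥ fun i => z i - μ i) := by
  have h : ∀ i, Continuous fun z : EuclideanSpace ℝ (Fin d) => z i :=
    fun i => (EuclideanSpace.proj i).continuous
  simp only [dotProduct, Matrix.mulVec]
  exact continuous_finset_sum _ fun i _ => ((h i).sub continuous_const).mul
    (continuous_finset_sum _ fun j _ => continuous_const.mul ((h j).sub continuous_const))

private lemma contQuad0NP (M : Matrix (Fin d) (Fin d) ℝ) :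
    Continuous fun z : EuclideanSpace ℝ (Fin d) =>
      (fun i => z i) ⬝ᵥ (M *ᵥ fun i => z i) := by
  have := contQuadNP M 0
  simpa using this

private lemma quad_smulNP (M : Matrix (Fin d) (Fin d) ℝ) (a : ℝ) (z : EuclideanSpace ℝ (Fin d)) :
    (fun i => (a • z) i) ⬝ᵥ (M *ᵥ fun i => (a • z) i)
      = a ^ 2 * ((fun i => z i) ⬝ᵥ (M *ᵥ fun i => z i)) := by
  have : (fun i => (a • z) i) = a • (fun i => z i) := by
    funext i; simp
  rw [this, smul_dotProduct, mulVec_smul, dotProduct_smul]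
  simp [smul_eq_mul]; ring

private lemma quad_lowerNP {M : Matrix (Fin d) (Fin d) ℝ} (hM : M.PosDef) :
    ∃ c : ℝ, 0 < c ∧ ∀ z : EuclideanSpace ℝ (Fin d),
      c * ‖z‖ ^ 2 ≤ (fun i => z i) ⬝ᵥ (M *ᵥ fun i => z i) := by
  have hpos : ∀ z : EuclideanSpace ℝ (Fin d), z ≠ 0 →
      0 < (fun i => z i) ⬝ᵥ (M *ᵥ fun i => z i) := by
    intro z hz
    have hz' : (fun i => z i) ≠ 0 := by
      intro h
      apply hz
      ext i
      exact congrFun h i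
    have := hM.dotProduct_mulVec_pos hz'
    simpa using this
  rcases Nat.eq_zero_or_pos d with hd | hd
  · refine ⟨1, one_pos, fun z => ?_⟩
    subst hd
    have hz : z = 0 := Subsingleton.elim _ _
    simp [hz, dotProduct]
  · have hne : (Metric.sphere (0 : EuclideanSpace ℝ (Fin d)) 1).Nonempty := by
      refine ⟨EuclideanSpace.single ⟨0, hd⟩ 1, ?_⟩
      simp [EuclideanSpace.norm_single]
    obtain ⟨z₀, hz₀mem, hz₀min⟩ :=
      (isCompact_sphere (0 : EuclideanSpace ℝ (Fin d)) 1).exists_isMinOn hne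
        ((contQuad0NP M).continuousOn)
    have hz₀norm : ‖z₀‖ = 1 := by simpa using hz₀mem
    have hz₀ne : z₀ ≠ 0 := by
      intro h; rw [h] at hz₀norm; simp at hz₀norm
    refine ⟨_, hpos z₀ hz₀ne, fun z => ?_⟩
    rcases eq_or_ne z 0 with rfl | hz
    · simp [dotProduct]
    · have hnz : (0:ℝ) < ‖z‖ := norm_pos_iff.mpr hz
      have hmem : ‖z‖⁻¹ • z ∈ Metric.sphere (0 : EuclideanSpace ℝ (Fin d)) 1 := by
        simp [norm_smul, abs_of_pos (inv_pos.mpr hnz), inv_mul_cancel₀ hnz.ne']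
      have hmin := hz₀min hmem
      have hq := quad_smulNP M ‖z‖⁻¹ z
      have hle : ((fun i => z₀ i) ⬝ᵥ (M *ᵥ fun i => z₀ i)) ≤
          ‖z‖⁻¹ ^ 2 * ((fun i => z i) ⬝ᵥ (M *ᵥ fun i => z i)) := by
        rw [← hq]; exact hmin
      calc ((fun i => z₀ i) ⬝ᵥ (M *ᵥ fun i => z₀ i)) * ‖z‖ ^ 2
          ≤ ‖z‖⁻¹ ^ 2 * ((fun i => z i) ⬝ᵥ (M *ᵥ fun i => z i)) * ‖z‖ ^ 2 :=
            mul_le_mul_of_nonneg_right hle (by positivity)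
        _ = (fun i => z i) ⬝ᵥ (M *ᵥ fun i => z i) := by
            field_simp

private lemma integrable_gaussNP (c : ℝ) (hc : 0 < c) :
    Integrable (fun z : EuclideanSpace ℝ (Fin d) => Real.exp (-c * ‖z‖ ^ 2)) := by
  have h := GaussianFourier.integrable_cexp_neg_mul_sq_norm_add
      (V := EuclideanSpace ℝ (Fin d)) (b := (c : ℂ)) (by simpa using hc) 0 0
  have h2 := h.norm
  refine h2.congr ?_
  filter_upwards with z
  rw [Complex.norm_exp]
  norm_num
  left
  rw [← Complex.ofReal_pow, Complex.ofReal_re]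

private lemma gauss_finiteNP (S : Matrix (Fin d) (Fin d) ℝ) (hpd : S.PosDef) :
    gaussianMeasure 0 S Set.univ < ⊤ := by
  obtain ⟨c, hc, hq⟩ := quad_lowerNP hpd.inv
  set C : ℝ := (2 * Real.pi) ^ (-(d : ℝ) / 2) * S.det ^ (-(1 : ℝ) / 2) with hC
  have hC0 : 0 ≤ C := by
    have h1 : (0:ℝ) < 2 * Real.pi := by positivity
    have h2 : (0:ℝ) < S.det := hpd.det_pos
    positivity
  have hbound : ∀ z : EuclideanSpace ℝ (Fin d),
      gaussianPDF 0 S z ≤ C * Real.exp (-(c/2) * ‖z‖ ^ 2) := by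
    intro z
    unfold _root_.gaussianPDF
    rw [← hC]
    apply mul_le_mul_of_nonneg_left _ hC0
    apply Real.exp_le_exp.mpr
    have := hq z
    simp only [PiLp.zero_apply, sub_zero] at *
    nlinarith
  have hint : Integrable (fun z : EuclideanSpace ℝ (Fin d) =>
      C * Real.exp (-(c/2) * ‖z‖ ^ 2)) :=
    (integrable_gaussNP (c/2) (by positivity)).const_mul C
  have heq : gaussianMeasure 0 S Set.univ
      = ∫⁻ z, ENNReal.ofReal (gaussianPDF 0 S z) := by
    rw [_root_.gaussianMeasure, withDensity_apply _ MeasurableSet.univ, setLIntegral_univ]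
  rw [heq]
  calc ∫⁻ z, ENNReal.ofReal (gaussianPDF 0 S z)
      ≤ ∫⁻ z, ENNReal.ofReal (C * Real.exp (-(c/2) * ‖z‖ ^ 2)) :=
        lintegral_mono fun z => ENNReal.ofReal_le_ofReal (hbound z)
    _ < ⊤ := hint.lintegral_lt_top

private lemma pdf_ratioNP (S : Matrix (Fin d) (Fin d) ℝ) (hsymm : S.IsSymm)
    (γ z : EuclideanSpace ℝ (Fin d)) :
    gaussianPDF γ S z = gaussianPDF 0 S z *
      Real.exp ((fun i => γ i) ⬝ᵥ (S⁻¹ *ᵥ fun i => z i)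
        - (1 / 2) * ((fun i => γ i) ⬝ᵥ (S⁻¹ *ᵥ fun i => γ i))) := by
  have hSinv : (S⁻¹)ᵀ = S⁻¹ := by
    rw [Matrix.transpose_nonsing_inv, hsymm.eq]
  let v : Fin d → ℝ := fun i => z i
  let w : Fin d → ℝ := fun i => γ i
  have hswap : v ⬝ᵥ (S⁻¹ *ᵥ w) = w ⬝ᵥ (S⁻¹ *ᵥ v) := by
    rw [Matrix.dotProduct_mulVec, ← Matrix.mulVec_transpose, hSinv,
      dotProduct_comm]
  have hexp : (fun i => z i - γ i) ⬝ᵥ (S⁻¹ *ᵥ fun i => z i - γ i)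
      = v ⬝ᵥ (S⁻¹ *ᵥ v) - 2 * (w ⬝ᵥ (S⁻¹ *ᵥ v)) + w ⬝ᵥ (S⁻¹ *ᵥ w) := by
    have hvw : (fun i => z i - γ i) = v - w := rfl
    rw [hvw, sub_dotProduct, Matrix.mulVec_sub, dotProduct_sub,
      dotProduct_sub, hswap]
    ring
  unfold _root_.gaussianPDF
  have h0 : (fun i => z i - (0 : EuclideanSpace ℝ (Fin d)) i) = v := by
    funext i; simp [v]
  rw [hexp, h0]
  conv_rhs => rw [mul_assoc, ← Real.exp_add]
  congr 1
  simp only [v, w]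
  ring

private lemma gaussianPDF_nonnegNP (μ : EuclideanSpace ℝ (Fin d))
    (S : Matrix (Fin d) (Fin d) ℝ) (hpd : S.PosDef) (z : EuclideanSpace ℝ (Fin d)) :
    0 ≤ gaussianPDF μ S z := by
  unfold _root_.gaussianPDF
  have h1 : (0:ℝ) < 2 * Real.pi := by positivity
  have h2 : (0:ℝ) < S.det := hpd.det_pos
  positivity

end aux

/-- Neyman–Pearson type monotonicity for the lower half-space A:
any measurable set at least as likely as A under N(0,Σ) is at least as
likely as A under N(γ,Σ). -/
theorem gaussian_halfspace_neyman_pearson_lower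
    {d : ℕ} (S : Matrix (Fin d) (Fin d) ℝ)
    (hsymm : S.IsSymm) (hpd : S.PosDef)
    (γ : EuclideanSpace ℝ (Fin d)) (hγ : γ ≠ 0)
    (p : ℝ) (hp : p ∈ Set.Ioo (0 : ℝ) 1)
    (T : Set (EuclideanSpace ℝ (Fin d))) (hT : MeasurableSet T)
    (hTA : gaussianMeasure 0 S {z : EuclideanSpace ℝ (Fin d) |
            (fun i => γ i) ⬝ᵥ (S⁻¹ *ᵥ fun i => z i)
              ≤ Real.sqrt ((fun i => γ i) ⬝ᵥ (S⁻¹ *ᵥ fun i => γ i)) * PhiInv p}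
          ≤ gaussianMeasure 0 S T) :
    gaussianMeasure γ S {z : EuclideanSpace ℝ (Fin d) |
        (fun i => γ i) ⬝ᵥ (S⁻¹ *ᵥ fun i => z i)
          ≤ Real.sqrt ((fun i => γ i) ⬝ᵥ (S⁻¹ *ᵥ fun i => γ i)) * PhiInv p}
      ≤ gaussianMeasure γ S T := by
  set c : ℝ := Real.sqrt ((fun i => γ i) ⬝ᵥ (S⁻¹ *ᵥ fun i => γ i)) * PhiInv p with hc
  set L : EuclideanSpace ℝ (Fin d) → ℝ :=
    fun z => (fun i => γ i) ⬝ᵥ (S⁻¹ *ᵥ fun i => z i) with hL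
  set A : Set (EuclideanSpace ℝ (Fin d)) := {z | L z ≤ c} with hAdef
  have hLcont : Continuous L := contLinNP S⁻¹ γ
  have hA : MeasurableSet A := by
    have : A = L ⁻¹' (Set.Iic c) := rfl
    rw [this]
    exact hLcont.measurable measurableSet_Iic
  set G : ℝ := (fun i => γ i) ⬝ᵥ (S⁻¹ *ᵥ fun i => γ i) with hG
  set r : ℝ := Real.exp (c - (1/2) * G) with hr
  set R : ENNReal := ENNReal.ofReal r with hR
  have hRtop : R ≠ ⊤ := ENNReal.ofReal_ne_top
  set ν := gaussianMeasure γ S with hν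
  set μ₀ := gaussianMeasure 0 S with hμ₀
  -- measurability of densities
  have hpdf0cont : Continuous fun z => gaussianPDF 0 S z := by
    unfold _root_.gaussianPDF
    exact continuous_const.mul
      (Real.continuous_exp.comp (continuous_const.mul (contQuadNP S⁻¹ 0)))
  have hf0 : Measurable fun z => ENNReal.ofReal (gaussianPDF 0 S z) :=
    hpdf0cont.measurable.ennreal_ofReal
  -- pointwise bounds
  have hptA : ∀ z ∈ A, ENNReal.ofReal (gaussianPDF γ S z)
      ≤ R * ENNReal.ofReal (gaussianPDF 0 S z) := by
    intro z hz
    rw [hR, ← ENNReal.ofReal_mul (Real.exp_nonneg _)]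
    apply ENNReal.ofReal_le_ofReal
    rw [pdf_ratioNP S hsymm γ z, mul_comm r _]
    apply mul_le_mul_of_nonneg_left _ (gaussianPDF_nonnegNP 0 S hpd z)
    apply Real.exp_le_exp.mpr
    have hzc : L z ≤ c := hz
    simp only [hL, hG] at *
    linarith
  have hptAc : ∀ z ∉ A, R * ENNReal.ofReal (gaussianPDF 0 S z)
      ≤ ENNReal.ofReal (gaussianPDF γ S z) := by
    intro z hz
    rw [hR, ← ENNReal.ofReal_mul (Real.exp_nonneg _)]
    apply ENNReal.ofReal_le_ofReal
    rw [pdf_ratioNP S hsymm γ z, mul_comm r _]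
    apply mul_le_mul_of_nonneg_left _ (gaussianPDF_nonnegNP 0 S hpd z)
    apply Real.exp_le_exp.mpr
    have : c < L z := lt_of_not_ge hz
    simp only [hL, hG] at *
    linarith
  -- step 1 : ν (A \ T) ≤ R * μ₀ (A \ T)
  have h1 : ν (A \ T) ≤ R * μ₀ (A \ T) := by
    rw [hν, hμ₀]
    simp only [_root_.gaussianMeasure]
    rw [withDensity_apply _ (hA.diff hT), withDensity_apply _ (hA.diff hT),
      ← lintegral_const_mul R hf0]
    apply setLIntegral_mono (hf0.const_mul R)
    intro z hz
    exact hptA z hz.1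
  -- step 2 : μ₀ (A \ T) ≤ μ₀ (T \ A)
  have h2 : μ₀ (A \ T) ≤ μ₀ (T \ A) := by
    have e1 : μ₀ (A ∩ T) + μ₀ (A \ T) = μ₀ A := measure_inter_add_diff A hT
    have e2 : μ₀ (T ∩ A) + μ₀ (T \ A) = μ₀ T := measure_inter_add_diff T hA
    have hfin : μ₀ (A ∩ T) ≠ ⊤ :=
      ((measure_mono (Set.subset_univ _)).trans_lt (gauss_finiteNP S hpd)).ne
    have : μ₀ (A ∩ T) + μ₀ (A \ T) ≤ μ₀ (A ∩ T) + μ₀ (T \ A) := by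
      rw [e1]
      calc μ₀ A ≤ μ₀ T := hTA
        _ = μ₀ (T ∩ A) + μ₀ (T \ A) := e2.symm
        _ = μ₀ (A ∩ T) + μ₀ (T \ A) := by rw [Set.inter_comm]
    exact (ENNReal.add_le_add_iff_left hfin).mp this
  -- step 3 : R * μ₀ (T \ A) ≤ ν (T \ A)
  have h3 : R * μ₀ (T \ A) ≤ ν (T \ A) := by
    rw [hν, hμ₀]
    simp only [_root_.gaussianMeasure]
    rw [withDensity_apply _ (hT.diff hA), withDensity_apply _ (hT.diff hA),
      ← lintegral_const_mul R hf0]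
    have hpdfγcont : Continuous fun z => gaussianPDF γ S z := by
      unfold _root_.gaussianPDF
      exact continuous_const.mul
        (Real.continuous_exp.comp (continuous_const.mul (contQuadNP S⁻¹ γ)))
    apply setLIntegral_mono hpdfγcont.measurable.ennreal_ofReal
    intro z hz
    exact hptAc z hz.2
  calc ν A = ν (A ∩ T) + ν (A \ T) := (measure_inter_add_diff A hT).symm
    _ ≤ ν (A ∩ T) + ν (T \ A) :=
        add_le_add_right (h1.trans ((mul_le_mul_right h2 R).trans h3)) _
    _ = ν (T ∩ A) + ν (T \ A) := by rw [Set.inter_comm]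
    _ = ν T := measure_inter_add_diff T hA
end

section
/- Let Σ ∈ ℝ^{d×d} be a symmetric positive-definite matrix, γ ∈ ℝ^d with γ ≠ 0, q ∈ (0,1), and B := { z ∈ ℝ^d : γᵀ Σ⁻¹ z ≥ √(γᵀ Σ⁻¹ γ) · Φ⁻¹(1 − q) }. Then for every measurable set S ⊆ ℝ^d with N(0,Σ)(S) ≤ N(0,Σ)(B), it holds that N(γ,Σ)(S) ≤ N(γ,Σ)(B); equivalently, for β ~ N(0,Σ), if P(β ∈ S) ≤ P(β ∈ B) then P(β + γ ∈ S) ≤ P(β + γ ∈ B). -/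
open MeasureTheory ProbabilityTheory Matrix Set

private lemma quad_expand {d : ℕ} (A : Matrix (Fin d) (Fin d) ℝ) (hA : A.IsSymm)
    (z γ : Fin d → ℝ) :
    (z - γ) ⬝ᵥ A *ᵥ (z - γ) = z ⬝ᵥ A *ᵥ z - 2 * (γ ⬝ᵥ A *ᵥ z) + γ ⬝ᵥ A *ᵥ γ := by
  have hcomm : z ⬝ᵥ A *ᵥ γ = γ ⬝ᵥ A *ᵥ z := by
    conv_lhs => rw [dotProduct_mulVec, ← hA.eq, vecMul_transpose, dotProduct_comm]
  simp only [mulVec_sub, dotProduct_sub, sub_dotProduct, hcomm]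
  ring

/-- Neyman–Pearson type monotonicity for the upper half-space B:
any measurable set at most as likely as B under N(0,Σ) is at most as
likely as B under N(γ,Σ). -/
theorem gaussian_halfspace_neyman_pearson_upper
    {d : ℕ} (S : Matrix (Fin d) (Fin d) ℝ)
    (hsymm : S.IsSymm) (hpd : S.PosDef)
    (γ : EuclideanSpace ℝ (Fin d)) (hγ : γ ≠ 0)
    (q : ℝ) (hq : q ∈ Set.Ioo (0 : ℝ) 1)
    (T : Set (EuclideanSpace ℝ (Fin d))) (hT : MeasurableSet T)
    (hTB : gaussianMeasure 0 S T
          ≤ gaussianMeasure 0 S {z : EuclideanSpace ℝ (Fin d) |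
            Real.sqrt ((fun i => γ i) ⬝ᵥ (S⁻¹ *ᵥ fun i => γ i)) * PhiInv (1 - q)
              ≤ (fun i => γ i) ⬝ᵥ (S⁻¹ *ᵥ fun i => z i)}) :
    gaussianMeasure γ S T
      ≤ gaussianMeasure γ S {z : EuclideanSpace ℝ (Fin d) |
          Real.sqrt ((fun i => γ i) ⬝ᵥ (S⁻¹ *ᵥ fun i => γ i)) * PhiInv (1 - q)
            ≤ (fun i => γ i) ⬝ᵥ (S⁻¹ *ᵥ fun i => z i)} := by
  classical
  set A : Matrix (Fin d) (Fin d) ℝ := S⁻¹ with hAdef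
  have hA : A.IsSymm := by
    show Aᵀ = A
    rw [hAdef, transpose_nonsing_inv, hsymm.eq]
  set w : Fin d → ℝ := fun i => γ i with hw
  set Q : ℝ := w ⬝ᵥ A *ᵥ w with hQ
  set c : ℝ := Real.sqrt Q * PhiInv (1 - q) with hc
  set hfun : EuclideanSpace ℝ (Fin d) → ℝ := fun z => w ⬝ᵥ A *ᵥ (fun i => z i) with hhf
  set B : Set (EuclideanSpace ℝ (Fin d)) := {z | c ≤ hfun z} with hB
  -- measurability of B
  have hmeas_hfun : Measurable hfun := by
    rw [hhf]
    simp only [dotProduct, Matrix.mulVec]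
    refine Finset.measurable_sum _ fun i _ => ?_
    refine Measurable.const_mul ?_ _
    exact Finset.measurable_sum _ fun j _ => (EuclideanSpace.proj (𝕜 := ℝ) j).continuous.measurable.const_mul _
  have hBmeas : MeasurableSet B := measurableSet_le measurable_const hmeas_hfun
  -- pdf factorization
  have hpdf0_nonneg : ∀ z, 0 ≤ gaussianPDF 0 S z := by
    intro z
    unfold _root_.gaussianPDF
    have h1 : (0:ℝ) < (2 * Real.pi) ^ (-(d : ℝ) / 2) :=
      Real.rpow_pos_of_pos (by positivity) _
    have h2 : (0:ℝ) < S.det ^ (-(1 : ℝ) / 2) := Real.rpow_pos_of_pos hpd.det_pos _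
    positivity
  have hpdf : ∀ z, gaussianPDF γ S z
      = gaussianPDF 0 S z * Real.exp (hfun z - Q / 2) := by
    intro z
    unfold _root_.gaussianPDF
    have hz0 : (fun i => z i - (0 : EuclideanSpace ℝ (Fin d)) i) = fun i => z i := by
      funext i; simp
    have hzb : (fun i => z i - γ i) = (fun i => z i) - w := rfl
    have key : (fun i => z i - γ i) ⬝ᵥ A *ᵥ (fun i => z i - γ i)
        = (fun i => z i) ⬝ᵥ A *ᵥ (fun i => z i) - 2 * hfun z + Q := by
      rw [hzb, quad_expand A hA]
    rw [hz0, ← hAdef, key]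
    rw [show -(1 / 2 : ℝ) * ((fun i => z i) ⬝ᵥ A *ᵥ (fun i => z i) - 2 * hfun z + Q)
        = -(1 / 2) * ((fun i => z i) ⬝ᵥ A *ᵥ (fun i => z i)) + (hfun z - Q / 2) by ring]
    rw [Real.exp_add]
    ring
  -- measures as integrals
  have happly : ∀ (μ0 : EuclideanSpace ℝ (Fin d)) (U : Set (EuclideanSpace ℝ (Fin d))),
      MeasurableSet U → gaussianMeasure μ0 S U
        = ∫⁻ z in U, ENNReal.ofReal (gaussianPDF μ0 S z) ∂volume := by
    intro μ0 U hU
    exact withDensity_apply _ hU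
  set k : ENNReal := ENNReal.ofReal (Real.exp (c - Q / 2)) with hk
  have hk_ne_top : k ≠ ⊤ := ENNReal.ofReal_ne_top
  have hk_ne_zero : k ≠ 0 := by
    rw [hk]
    simp [Real.exp_pos]
  have hfactor : ∀ z, ENNReal.ofReal (gaussianPDF γ S z)
      = ENNReal.ofReal (gaussianPDF 0 S z) * ENNReal.ofReal (Real.exp (hfun z - Q / 2)) := by
    intro z
    rw [hpdf z, ENNReal.ofReal_mul (hpdf0_nonneg z)]
  -- key estimates
  have hupper : ∀ U : Set (EuclideanSpace ℝ (Fin d)), MeasurableSet U → U ⊆ Bᶜ →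
      gaussianMeasure γ S U ≤ k * gaussianMeasure 0 S U := by
    intro U hU hUB
    rw [happly γ U hU, happly 0 U hU]
    calc ∫⁻ z in U, ENNReal.ofReal (gaussianPDF γ S z) ∂volume
        ≤ ∫⁻ z in U, k * ENNReal.ofReal (gaussianPDF 0 S z) ∂volume := by
          refine setLIntegral_mono' hU fun z hz => ?_
          rw [hfactor z, mul_comm]
          refine mul_le_mul_left ?_ _
          refine ENNReal.ofReal_le_ofReal (Real.exp_le_exp.2 ?_)
          have : ¬ c ≤ hfun z := hUB hz
          linarith [lt_of_not_ge this]
      _ = k * ∫⁻ z in U, ENNReal.ofReal (gaussianPDF 0 S z) ∂volume :=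
          lintegral_const_mul' _ _ hk_ne_top
  have hlower : ∀ U : Set (EuclideanSpace ℝ (Fin d)), MeasurableSet U → U ⊆ B →
      k * gaussianMeasure 0 S U ≤ gaussianMeasure γ S U := by
    intro U hU hUB
    rw [happly γ U hU, happly 0 U hU, ← lintegral_const_mul' _ _ hk_ne_top]
    refine setLIntegral_mono' hU fun z hz => ?_
    rw [hfactor z, mul_comm _ (ENNReal.ofReal (Real.exp (hfun z - Q / 2)))]
    refine mul_le_mul_left ?_ _
    exact ENNReal.ofReal_le_ofReal (Real.exp_le_exp.2 (by
      have : c ≤ hfun z := hUB hz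
      linarith))
  -- main argument
  show gaussianMeasure γ S T ≤ gaussianMeasure γ S B
  by_cases htop : gaussianMeasure γ S B = ⊤
  · rw [htop]; exact le_top
  · have hB0_fin : gaussianMeasure 0 S B ≠ ⊤ := by
      intro hcon
      have := hlower B hBmeas (subset_refl B)
      rw [hcon, ENNReal.mul_top hk_ne_zero] at this
      exact htop (top_le_iff.1 this)
    have hTB_fin : gaussianMeasure 0 S (T ∩ B) ≠ ⊤ :=
      fun hcon => hB0_fin (top_le_iff.1
        (hcon ▸ measure_mono inter_subset_right))
    -- μ₀(T \ B) ≤ μ₀(B \ T)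
    have h0 : gaussianMeasure 0 S (T \ B) ≤ gaussianMeasure 0 S (B \ T) := by
      have h1 : gaussianMeasure 0 S (T ∩ B) + gaussianMeasure 0 S (T \ B)
          = gaussianMeasure 0 S T := measure_inter_add_diff T hBmeas
      have h2 : gaussianMeasure 0 S (T ∩ B) + gaussianMeasure 0 S (B \ T)
          = gaussianMeasure 0 S B := by
        rw [inter_comm]; exact measure_inter_add_diff B hT
      rw [← ENNReal.add_le_add_iff_left hTB_fin, h1, h2]
      exact hTB
    have h1 : gaussianMeasure γ S (T ∩ B) + gaussianMeasure γ S (T \ B)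
        = gaussianMeasure γ S T := measure_inter_add_diff T hBmeas
    have h2 : gaussianMeasure γ S (T ∩ B) + gaussianMeasure γ S (B \ T)
        = gaussianMeasure γ S B := by
      rw [inter_comm]; exact measure_inter_add_diff B hT
    calc gaussianMeasure γ S T
        = gaussianMeasure γ S (T ∩ B) + gaussianMeasure γ S (T \ B) := h1.symm
      _ ≤ gaussianMeasure γ S (T ∩ B) + k * gaussianMeasure 0 S (T \ B) := by
          exact add_le_add_right (hupper _ (hT.diff hBmeas) fun z hz => hz.2) _
      _ ≤ gaussianMeasure γ S (T ∩ B) + k * gaussianMeasure 0 S (B \ T) := by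
          exact add_le_add_right (mul_le_mul_right h0 k) _
      _ ≤ gaussianMeasure γ S (T ∩ B) + gaussianMeasure γ S (B \ T) := by
          exact add_le_add_right (hlower _ (hBmeas.diff hT) fun z hz => hz.1) _
      _ = gaussianMeasure γ S B := h2
end

section
/- Let Y be a finite set of classes, x ∈ ℝ^m, γ ∈ ℝ^d, σ > 0, and let T_δ : ℝ^m → ℝ^m (δ ∈ ℝ^d) be maps satisfying T_β ∘ T_γ' = T_{β+γ'} for all β, γ' ∈ ℝ^d, and I : ℝ^m → ℝ^m a map (interpolation); write T^I_δ := I ∘ T_δ. Let h : ℝ^m → Y be measurable with β ↦ h(T^I_β(x)) measurable, and suppose the interpolation-invariance condition h( T^I_β( T^I_{γ'}(x) ) ) = h( T^I_{β+γ'}(x) ) holds for all β, γ' ∈ ℝ^d. Suppose further there exist p_A, p_B ∈ (0,1) and c_A ∈ Y with P_{β ~ N(0,σ²𝟙)}( h(T^I_β(x)) = c_A ) ≥ p_A ≥ p_B ≥ max_{c ≠ c_A} P_{β ~ N(0,σ²𝟙)}( h(T^I_β(x)) = c ). Then for every γ with ‖γ‖₂ < (σ/2)(Φ⁻¹(p_A)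 − Φ⁻¹(p_B)) and every class c_B ≠ c_A, P_{β ~ N(0,σ²𝟙)}( h(T^I_β( T^I_γ(x) )) = c_A ) > P_{β ~ N(0,σ²𝟙)}( h(T^I_β( T^I_γ(x) )) = c_B ); i.e. the smoothed classifier g_E(z) := argmax_c P_{β ~ N(0,σ²𝟙)}( h(T^I_β(z)) = c ) satisfies g_E( T^I_γ(x) ) = c_A = g_E(x). -/
open MeasureTheory ProbabilityTheory Matrix Set Filter
open scoped ENNReal NNReal

namespace SmoothingAux

lemma Phi_nonneg (x : ℝ) : 0 ≤ Phi x := ENNReal.toReal_nonneg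

lemma Phi_le_one (x : ℝ) : Phi x ≤ 1 := by
  have := prob_le_one (μ := gaussianReal 0 1) (s := Set.Iic x)
  simpa [Phi] using ENNReal.toReal_mono ENNReal.one_ne_top this

lemma Phi_pos (x : ℝ) : 0 < Phi x := by
  rw [Phi]
  apply ENNReal.toReal_pos _ (measure_ne_top _ _)
  intro hcon
  have := (gaussianReal_absolutelyContinuous' 0 one_ne_zero) hcon
  simp [Real.volume_Iic] at this

lemma strictMono_Phi : StrictMono Phi := by
  intro a b hab
  have h1 : gaussianReal 0 1 (Iic a) + gaussianReal 0 1 (Ioc a b)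
      = gaussianReal 0 1 (Iic b) := by
    rw [← measure_union (Iic_disjoint_Ioc le_rfl) measurableSet_Ioc,
      Iic_union_Ioc_eq_Iic hab.le]
  have h2 : gaussianReal 0 1 (Ioc a b) ≠ 0 := by
    intro h
    have := (gaussianReal_absolutelyContinuous' 0 one_ne_zero) h
    rw [Real.volume_Ioc, ENNReal.ofReal_eq_zero] at this
    linarith
  have : gaussianReal 0 1 (Iic a) < gaussianReal 0 1 (Iic b) := by
    rw [← h1]
    exact ENNReal.lt_add_right (measure_ne_top _ _) h2
  exact (ENNReal.toReal_lt_toReal (measure_ne_top _ _) (measure_ne_top _ _)).mpr this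

lemma g01_map_neg : (gaussianReal 0 1).map (fun x : ℝ => -x) = gaussianReal 0 1 := by
  have h := gaussianReal_map_const_mul (μ := 0) (v := 1) (-1)
  have hv : (⟨(-1:ℝ)^2, sq_nonneg _⟩ : ℝ≥0) * 1 = 1 := by
    ext; norm_num
  simp only [neg_one_mul, mul_zero, hv] at h
  convert h using 2
  ext
  norm_num

lemma g01_singleton (y : ℝ) : gaussianReal 0 1 {y} = 0 :=
  (gaussianReal_absolutelyContinuous 0 one_ne_zero) (Real.volume_singleton)

lemma g01_Iio (y : ℝ) : gaussianReal 0 1 (Iio y) = gaussianReal 0 1 (Iic y) :=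
  measure_congr (Iio_ae_eq_Iic' (g01_singleton y))

lemma g01_Ici (y : ℝ) : gaussianReal 0 1 (Ici y) = gaussianReal 0 1 (Iic (-y)) := by
  conv_rhs => rw [← g01_map_neg]
  rw [Measure.map_apply measurable_neg measurableSet_Iic]
  congr 1
  ext x
  simp [neg_le]

lemma Phi_neg (y : ℝ) : Phi (-y) = 1 - Phi y := by
  have hIci : gaussianReal 0 1 (Iic (-y)) = 1 - gaussianReal 0 1 (Iic y) := by
    rw [← g01_Ici, ← g01_Iio, show Ici y = (Iio y)ᶜ from (compl_Iio).symm,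
      measure_compl measurableSet_Iio (measure_ne_top _ _), measure_univ, g01_Iio]
  rw [Phi, hIci, ENNReal.toReal_sub_of_le prob_le_one ENNReal.one_ne_top, ENNReal.toReal_one, Phi]

lemma Phi_sub (a b : ℝ) (hab : a ≤ b) :
    Phi b - Phi a = ∫ x in a..b, gaussianPDFReal 0 1 x := by
  have h1 : gaussianReal 0 1 (Iic a) + gaussianReal 0 1 (Ioc a b)
      = gaussianReal 0 1 (Iic b) := by
    rw [← measure_union (Iic_disjoint_Ioc le_rfl) measurableSet_Ioc,
      Iic_union_Ioc_eq_Iic hab]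
  have h2 : Phi a + (gaussianReal 0 1 (Ioc a b)).toReal = Phi b := by
    rw [Phi, Phi, ← ENNReal.toReal_add (measure_ne_top _ _) (measure_ne_top _ _), h1]
  rw [intervalIntegral.integral_of_le hab, ← h2]
  rw [gaussianReal_apply_eq_integral _ one_ne_zero,
    ENNReal.toReal_ofReal (integral_nonneg fun x => gaussianPDFReal_nonneg _ _ _)]
  ring

lemma Phi_eq (b : ℝ) : Phi b = Phi 0 + ∫ x in (0:ℝ)..b, gaussianPDFReal 0 1 x := by
  rcases le_total 0 b with hb | hb
  · have := Phi_sub 0 b hb; linarith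
  · have := Phi_sub b 0 hb
    rw [intervalIntegral.integral_symm]
    linarith

lemma continuous_Phi : Continuous Phi := by
  have : Phi = fun b => Phi 0 + ∫ x in (0:ℝ)..b, gaussianPDFReal 0 1 x :=
    funext Phi_eq
  rw [this]
  exact continuous_const.add (intervalIntegral.continuous_primitive
    (fun a b => (integrable_gaussianPDFReal 0 1).intervalIntegrable) 0)

lemma tendsto_Phi_atTop : Tendsto Phi atTop (nhds 1) := by
  have h := tendsto_measure_Iic_atTop (gaussianReal 0 1)
  rw [measure_univ] at h
  exact (ENNReal.tendsto_toReal ENNReal.one_ne_top).comp h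

lemma tendsto_Phi_atBot : Tendsto Phi atBot (nhds 0) := by
  have : Phi = fun x => 1 - Phi (-x) := by
    funext x
    have := Phi_neg (-x)
    rw [neg_neg] at this
    linarith
  rw [this]
  have h2 : Tendsto (fun x : ℝ => Phi (-x)) atBot (nhds 1) :=
    tendsto_Phi_atTop.comp tendsto_neg_atBot_atTop
  have := (tendsto_const_nhds (x := (1:ℝ)) (f := atBot)).sub h2
  simpa using this

lemma exists_Phi_eq {p : ℝ} (hp : p ∈ Set.Ioo (0:ℝ) 1) : ∃ x, Phi x = p := by
  obtain ⟨a, ha⟩ := (tendsto_Phi_atBot.eventually_lt_const hp.1).exists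
  obtain ⟨b, hb⟩ := (tendsto_Phi_atTop.eventually_const_lt hp.2).exists
  have hab : a ≤ b := by
    by_contra hcon
    push_neg at hcon
    have := strictMono_Phi hcon
    linarith
  have := intermediate_value_Icc hab continuous_Phi.continuousOn
  obtain ⟨x, _, hx⟩ := this ⟨ha.le, hb.le⟩
  exact ⟨x, hx⟩

lemma Phi_PhiInv {p : ℝ} (hp : p ∈ Set.Ioo (0:ℝ) 1) : Phi (PhiInv p) = p :=
  Function.invFun_eq (exists_Phi_eq hp)

/-- Neyman-Pearson style comparison. -/
lemma np {α : Type*} [MeasurableSpace α] (μ : Measure α) [IsFiniteMeasure μ]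
    {f : α → ℝ≥0∞} (hf : Measurable f) {c : ℝ≥0∞} (hc : c ≠ ⊤) {P Q : Set α}
    (hP : MeasurableSet P) (hQ : MeasurableSet Q)
    (h1 : ∀ z ∈ Q, z ∉ P → f z ≤ c) (h2 : ∀ z ∈ P, z ∉ Q → c ≤ f z)
    (hm : μ Q ≤ μ P) :
    ∫⁻ z in Q, f z ∂μ ≤ ∫⁻ z in P, f z ∂μ := by
  have hQP : μ (Q \ P) ≤ μ (P \ Q) := by
    have e1 : μ (Q \ P) + μ (Q ∩ P) = μ Q := measure_diff_add_inter Q hP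
    have e2 : μ (P \ Q) + μ (P ∩ Q) = μ P := measure_diff_add_inter P hQ
    rw [inter_comm] at e2
    have : μ (Q \ P) + μ (Q ∩ P) ≤ μ (P \ Q) + μ (Q ∩ P) := by
      rw [e1, e2]; exact hm
    exact ENNReal.le_of_add_le_add_right (measure_ne_top _ _) this
  have splitQ : ∫⁻ z in Q, f z ∂μ
      = ∫⁻ z in Q ∩ P, f z ∂μ + ∫⁻ z in Q \ P, f z ∂μ := by
    rw [← lintegral_union (hQ.diff hP)
      (disjoint_sdiff_right.mono_left inter_subset_right), inter_union_diff]
  have splitP : ∫⁻ z in P, f z ∂μ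
      = ∫⁻ z in P ∩ Q, f z ∂μ + ∫⁻ z in P \ Q, f z ∂μ := by
    rw [← lintegral_union (hP.diff hQ)
      (disjoint_sdiff_right.mono_left inter_subset_right), inter_union_diff]
  have key : ∫⁻ z in Q \ P, f z ∂μ ≤ ∫⁻ z in P \ Q, f z ∂μ := by
    calc ∫⁻ z in Q \ P, f z ∂μ ≤ ∫⁻ _ in Q \ P, c ∂μ :=
          setLIntegral_mono measurable_const fun z hz => h1 z hz.1 hz.2
      _ = c * μ (Q \ P) := by rw [setLIntegral_const]
      _ ≤ c * μ (P \ Q) := mul_le_mul_right hQP c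
      _ = ∫⁻ _ in P \ Q, c ∂μ := by rw [setLIntegral_const]
      _ ≤ ∫⁻ z in P \ Q, f z ∂μ :=
          setLIntegral_mono hf fun z hz => h2 z hz.1 hz.2
  rw [splitQ, splitP, inter_comm]
  exact add_le_add le_rfl key

/-- Tonelli for products of functions of coordinates. -/
lemma lintegral_pi_prod : ∀ {n : ℕ} (f : Fin n → ℝ → ℝ≥0∞), (∀ i, Measurable (f i)) →
    ∫⁻ y, ∏ i, f i (y i) ∂(Measure.pi fun _ : Fin n => (volume : Measure ℝ))
      = ∏ i, ∫⁻ x, f i x := by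
  intro n
  induction n with
  | zero => intro f _; simp
  | succ n ih =>
    intro f hf
    have hmp := (measurePreserving_piFinSuccAbove
      (fun _ : Fin (n+1) => (volume : Measure ℝ)) 0).symm
    have hFmeas : Measurable fun y : Fin (n+1) → ℝ => ∏ i, f i (y i) :=
      Finset.measurable_prod _ fun i _ => (hf i).comp (measurable_pi_apply i)
    rw [← hmp.map_eq, lintegral_map hFmeas hmp.measurable]
    have : ∀ p : ℝ × (Fin n → ℝ),
        (∏ i, f i (((MeasurableEquiv.piFinSuccAbove (fun _ : Fin (n+1) => ℝ) 0).symm p) i))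
          = f 0 p.1 * ∏ j, f (Fin.succ j) (p.2 j) := by
      intro p
      rw [Fin.prod_univ_succ]
      simp [MeasurableEquiv.piFinSuccAbove_symm_apply, Fin.insertNthEquiv,
        Fin.insertNth_zero]
    simp_rw [this]
    have hkey := lintegral_prod_mul (μ := (volume : Measure ℝ))
      (ν := Measure.pi fun _ : Fin n => (volume : Measure ℝ)) (f := f 0)
      (g := fun y : Fin n → ℝ => ∏ j, f (Fin.succ j) (y j)) ((hf 0).aemeasurable)
      ((Finset.measurable_prod _ fun j _ => (hf _).comp (measurable_pi_apply j)).aemeasurable)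
    rw [hkey, ih _ (fun j => hf _), Fin.prod_univ_succ]


section Geometry

variable {d : ℕ} {σ : ℝ}

noncomputable def V (σ : ℝ) : ℝ≥0 := ⟨σ^2, sq_nonneg σ⟩

lemma sum_sq_eq (z : EuclideanSpace ℝ (Fin d)) : ∑ i, z i ^ 2 = ‖z‖^2 := by
  rw [EuclideanSpace.norm_eq, Real.sq_sqrt]
  · simp [sq]
  · positivity

lemma pdf_norm_eq (hσ : 0 < σ) (z : EuclideanSpace ℝ (Fin d)) :
    _root_.gaussianPDF 0 (σ^2 • (1 : Matrix (Fin d) (Fin d) ℝ)) z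
      = (2 * Real.pi * σ^2) ^ (-(d:ℝ)/2) * Real.exp (-‖z‖^2 / (2*σ^2)) := by
  have hσ2 : (0:ℝ) < σ^2 := by positivity
  have hinv : (σ^2 • (1 : Matrix (Fin d) (Fin d) ℝ))⁻¹ = (σ^2)⁻¹ • 1 := by
    apply Matrix.inv_eq_right_inv
    rw [Matrix.smul_mul, Matrix.mul_smul, Matrix.one_mul, smul_smul,
      mul_inv_cancel₀ hσ2.ne', one_smul]
  unfold _root_.gaussianPDF
  rw [hinv]
  have hsub : (fun i => z i - (0 : EuclideanSpace ℝ (Fin d)) i) = fun i => z i := by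
    funext i; simp
  rw [hsub]
  have hmv : ((σ^2)⁻¹ • (1 : Matrix (Fin d) (Fin d) ℝ)) *ᵥ (fun i => z i)
      = (σ^2)⁻¹ • fun i => z i := by
    rw [Matrix.smul_mulVec, Matrix.one_mulVec]
  rw [hmv]
  have hdot : (fun i => z i) ⬝ᵥ ((σ^2)⁻¹ • fun i => z i) = (σ^2)⁻¹ * ‖z‖^2 := by
    rw [dotProduct_smul, smul_eq_mul, ← sum_sq_eq]
    congr 1
    simp [dotProduct, sq]
  rw [hdot]
  have hdet : (σ^2 • (1 : Matrix (Fin d) (Fin d) ℝ)).det = ((σ^2)^d : ℝ) := by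
    rw [Matrix.det_smul, Matrix.det_one, mul_one, Fintype.card_fin]
  rw [hdet]
  have hc : ((σ^2)^d : ℝ) ^ (-(1:ℝ)/2) = (σ^2 : ℝ) ^ (-(d:ℝ)/2) := by
    rw [← Real.rpow_natCast (σ^2) d, ← Real.rpow_mul hσ2.le]
    congr 1
    ring
  rw [hc, ← Real.mul_rpow (by positivity) hσ2.le]
  congr 1
  field_simp

lemma pdf_prod_eq (hσ : 0 < σ) (z : EuclideanSpace ℝ (Fin d)) :
    _root_.gaussianPDF 0 (σ^2 • (1 : Matrix (Fin d) (Fin d) ℝ)) z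
      = ∏ i, gaussianPDFReal 0 (V σ) (z i) := by
  rw [pdf_norm_eq hσ]
  have hσ2 : (0:ℝ) < σ^2 := by positivity
  have h2πσ : (0:ℝ) < 2 * Real.pi * σ^2 := by positivity
  unfold gaussianPDFReal
  rw [Finset.prod_mul_distrib, Finset.prod_const]
  congr 1
  · rw [Finset.card_univ, Fintype.card_fin]
    have : (V σ : ℝ) = σ^2 := rfl
    rw [this, Real.sqrt_eq_rpow, ← Real.rpow_neg h2πσ.le, ← Real.rpow_natCast _ d,
      ← Real.rpow_mul h2πσ.le]
    congr 1
    ring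
  · rw [← Real.exp_sum]
    congr 1
    have : (V σ : ℝ) = σ^2 := rfl
    simp_rw [this, sub_zero]
    rw [← sum_sq_eq, ← Finset.sum_div, ← Finset.sum_neg_distrib]

lemma mu_eq_withDensity (hσ : 0 < σ) :
    gaussianMeasure (0 : EuclideanSpace ℝ (Fin d)) (σ^2 • 1)
      = volume.withDensity (fun z => ENNReal.ofReal
          ((2 * Real.pi * σ^2) ^ (-(d:ℝ)/2) * Real.exp (-‖z‖^2 / (2*σ^2)))) := by
  unfold gaussianMeasure
  congr 1
  funext z
  rw [pdf_norm_eq hσ]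

lemma measurable_density :
    Measurable (fun z : EuclideanSpace ℝ (Fin d) => ENNReal.ofReal
      ((2 * Real.pi * σ^2) ^ (-(d:ℝ)/2) * Real.exp (-‖z‖^2 / (2*σ^2)))) := by
  apply Measurable.ennreal_ofReal
  apply Measurable.const_mul
  exact (Real.continuous_exp.comp ((continuous_norm.pow 2).neg.div_const _)).measurable

lemma measurable_density' (hσ : 0 < σ) :
    Measurable (fun z : EuclideanSpace ℝ (Fin d) =>
      ENNReal.ofReal (_root_.gaussianPDF 0 (σ^2 • (1 : Matrix (Fin d) (Fin d) ℝ)) z)) := by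
  have : (fun z : EuclideanSpace ℝ (Fin d) =>
      ENNReal.ofReal (_root_.gaussianPDF 0 (σ^2 • (1 : Matrix (Fin d) (Fin d) ℝ)) z))
      = fun z => ENNReal.ofReal
          ((2 * Real.pi * σ^2) ^ (-(d:ℝ)/2) * Real.exp (-‖z‖^2 / (2*σ^2))) := by
    funext z; rw [pdf_norm_eq hσ]
  rw [this]
  exact measurable_density

lemma mu_eq_map (hσ : 0 < σ) :
    gaussianMeasure (0 : EuclideanSpace ℝ (Fin d)) (σ^2 • 1)
      = (Measure.pi fun _ : Fin d => gaussianReal 0 (V σ)).map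
          (MeasurableEquiv.toLp 2 (Fin d → ℝ)).symm.symm := by
  have hV : V σ ≠ 0 := by
    intro hcon
    have : σ^2 = 0 := congrArg NNReal.toReal hcon
    nlinarith
  have hpi : Measure.pi (fun _ : Fin d => gaussianReal 0 (V σ))
      = (volume : Measure (Fin d → ℝ)).withDensity
          (fun y => ∏ i, ProbabilityTheory.gaussianPDF 0 (V σ) (y i)) := by
    apply Measure.pi_eq
    intro s hs
    rw [withDensity_apply _ (MeasurableSet.univ_pi hs)]
    have hind : ∀ y : Fin d → ℝ, (Set.pi univ s).indicator
        (fun y => ∏ i, ProbabilityTheory.gaussianPDF 0 (V σ) (y i)) y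
          = ∏ i, (s i).indicator (ProbabilityTheory.gaussianPDF 0 (V σ)) (y i) := by
      intro y
      by_cases hy : y ∈ Set.pi univ s
      · rw [Set.indicator_of_mem hy]
        exact Finset.prod_congr rfl fun i _ =>
          (Set.indicator_of_mem (hy i (mem_univ i)) _).symm
      · rw [Set.indicator_of_notMem hy]
        rw [Set.mem_univ_pi] at hy
        push_neg at hy
        obtain ⟨i, hi⟩ := hy
        exact (Finset.prod_eq_zero (Finset.mem_univ i)
          (by rw [Set.indicator_of_notMem hi])).symm
    rw [← lintegral_indicator (MeasurableSet.univ_pi hs) _]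
    simp_rw [hind]
    rw [volume_pi, lintegral_pi_prod _ (fun i =>
      (measurable_gaussianPDF _ _).indicator (hs i))]
    exact Finset.prod_congr rfl fun i _ => by
      rw [lintegral_indicator (hs i) _, ← gaussianReal_apply _ hV]
  rw [hpi]
  have hvol : (volume : Measure (EuclideanSpace ℝ (Fin d)))
      = ((volume : Measure (Fin d → ℝ))).map
          (MeasurableEquiv.toLp 2 (Fin d → ℝ)).symm.symm :=
    ((EuclideanSpace.volume_preserving_symm_measurableEquiv_toLp (Fin d)).symm _).map_eq.symm
  unfold gaussianMeasure
  rw [hvol]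
  ext t ht
  rw [withDensity_apply _ ht,
    setLIntegral_map ht (measurable_density' hσ)
      (MeasurableEquiv.toLp 2 (Fin d → ℝ)).symm.symm.measurable,
    Measure.map_apply (MeasurableEquiv.toLp 2 (Fin d → ℝ)).symm.symm.measurable ht,
    withDensity_apply _ ((MeasurableEquiv.toLp 2 (Fin d → ℝ)).symm.symm.measurable ht)]
  apply lintegral_congr
  intro y
  rw [pdf_prod_eq hσ]
  rw [ENNReal.ofReal_prod_of_nonneg (fun i _ => gaussianPDFReal_nonneg _ _ _)]
  rfl

lemma isProb (hσ : 0 < σ) :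
    IsProbabilityMeasure (gaussianMeasure (0 : EuclideanSpace ℝ (Fin d)) (σ^2 • 1)) := by
  constructor
  rw [mu_eq_map hσ, Measure.map_apply
    (MeasurableEquiv.toLp 2 (Fin d → ℝ)).symm.symm.measurable MeasurableSet.univ,
    preimage_univ]
  exact measure_univ

lemma V_ne_zero (hσ : 0 < σ) : V σ ≠ 0 := by
  intro hcon
  have : σ^2 = 0 := congrArg NNReal.toReal hcon
  nlinarith

lemma gaussianReal_V_Iic (hσ : 0 < σ) (c : ℝ) :
    gaussianReal 0 (V σ) (Iic c) = ENNReal.ofReal (Phi (c / σ)) := by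
  have hmap : gaussianReal 0 (V σ) = (gaussianReal 0 1).map (σ * ·) := by
    rw [gaussianReal_map_const_mul σ]
    congr 1
    · ring
    · ext
      simp [V]
      rfl
  rw [hmap, Measure.map_apply (measurable_const_mul σ) measurableSet_Iic]
  have hpre : (σ * ·) ⁻¹' (Iic c) = Iic (c / σ) := by
    ext x
    simp only [Set.mem_preimage, Set.mem_Iic]
    rw [le_div_iff₀ hσ, mul_comm]
  rw [hpre, Phi, ENNReal.ofReal_toReal (measure_ne_top _ _)]

lemma gaussianReal_V_Iio (hσ : 0 < σ) (c : ℝ) :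
    gaussianReal 0 (V σ) (Iio c) = ENNReal.ofReal (Phi (c / σ)) := by
  rw [← gaussianReal_V_Iic hσ]
  apply measure_congr
  exact Iio_ae_eq_Iic'
    ((gaussianReal_absolutelyContinuous 0 (V_ne_zero hσ)) Real.volume_singleton)

lemma coord_set_eq (i₀ : Fin d) (s : Set ℝ) :
    {y : Fin d → ℝ | y i₀ ∈ s} = Set.pi univ (Function.update (fun _ => (univ : Set ℝ)) i₀ s) := by
  ext y
  simp only [Set.mem_setOf_eq, Set.mem_univ_pi, Function.update_apply]
  constructor
  · intro hy i
    by_cases hi : i = i₀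
    · subst hi; simp [hy]
    · simp [hi]
  · intro hy
    have := hy i₀
    simpa using this

lemma mu_coord_aux (hσ : 0 < σ) (i₀ : Fin d) (s : Set ℝ) (hs : MeasurableSet s) :
    gaussianMeasure (0 : EuclideanSpace ℝ (Fin d)) (σ^2 • 1)
        {z : EuclideanSpace ℝ (Fin d) | z i₀ ∈ s} = gaussianReal 0 (V σ) s := by
  have hproj : Measurable fun z : EuclideanSpace ℝ (Fin d) => z i₀ :=
    (EuclideanSpace.proj (𝕜 := ℝ) i₀).continuous.measurable
  have hmeasS : MeasurableSet {z : EuclideanSpace ℝ (Fin d) | z i₀ ∈ s} := hproj hs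
  rw [mu_eq_map hσ, Measure.map_apply
    (MeasurableEquiv.toLp 2 (Fin d → ℝ)).symm.symm.measurable hmeasS]
  have hpre : (MeasurableEquiv.toLp 2 (Fin d → ℝ)).symm.symm ⁻¹'
      {z : EuclideanSpace ℝ (Fin d) | z i₀ ∈ s} = {y : Fin d → ℝ | y i₀ ∈ s} := rfl
  rw [hpre, coord_set_eq, Measure.pi_pi]
  rw [Finset.prod_eq_single i₀
    (fun i _ hi => by rw [Function.update_of_ne hi]; exact measure_univ)
    (fun hmem => absurd (Finset.mem_univ i₀) hmem)]
  rw [Function.update_self]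

lemma mu_rot (hσ : 0 < σ) (b : OrthonormalBasis (Fin d) ℝ (EuclideanSpace ℝ (Fin d)))
    {t : Set (EuclideanSpace ℝ (Fin d))} (ht : MeasurableSet t) :
    gaussianMeasure (0 : EuclideanSpace ℝ (Fin d)) (σ^2 • 1) (⇑b.repr ⁻¹' t)
      = gaussianMeasure (0 : EuclideanSpace ℝ (Fin d)) (σ^2 • 1) t := by
  rw [mu_eq_withDensity hσ]
  set D := fun z : EuclideanSpace ℝ (Fin d) => ENNReal.ofReal
    ((2 * Real.pi * σ^2) ^ (-(d:ℝ)/2) * Real.exp (-‖z‖^2 / (2*σ^2))) with hD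
  have hmeasrepr : Measurable (⇑b.repr) := b.repr.continuous.measurable
  rw [withDensity_apply _ (hmeasrepr ht), withDensity_apply _ ht,
    ← lintegral_indicator (hmeasrepr ht) _, ← lintegral_indicator ht _]
  have hpt : ∀ z, (⇑b.repr ⁻¹' t).indicator D z = t.indicator D (b.repr z) := by
    intro z
    classical
    rw [Set.indicator_apply, Set.indicator_apply, Set.mem_preimage]
    by_cases hz : b.repr z ∈ t
    · simp only [hz, if_true, hD, LinearIsometryEquiv.norm_map]
    · simp [hz]
  calc ∫⁻ z, (⇑b.repr ⁻¹' t).indicator D z = ∫⁻ z, ((t.indicator D) ∘ ⇑b.repr) z := by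
        exact lintegral_congr hpt
    _ = ∫⁻ w, t.indicator D w ∂(Measure.map (⇑b.repr) volume) :=
        lintegral_comp (measurable_density.indicator ht) hmeasrepr
    _ = ∫⁻ w, t.indicator D w := by rw [(b.measurePreserving_repr).map_eq]

lemma mu_inner_set (hσ : 0 < σ) {γ : EuclideanSpace ℝ (Fin d)} (hγ : γ ≠ 0)
    {s : Set ℝ} (hs : MeasurableSet s) :
    gaussianMeasure (0 : EuclideanSpace ℝ (Fin d)) (σ^2 • 1)
        {z | (inner ℝ γ z : ℝ) ∈ s}
      = gaussianReal 0 (V σ) ((fun r => ‖γ‖ * r) ⁻¹' s) := by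
  have hd : 0 < d := by
    rcases Nat.eq_zero_or_pos d with h0 | h
    · exfalso
      apply hγ
      subst h0
      ext i
      exact i.elim0
    · exact h
  set i₀ : Fin d := ⟨0, hd⟩
  have hγn : ‖γ‖ ≠ 0 := norm_ne_zero_iff.mpr hγ
  set u : EuclideanSpace ℝ (Fin d) := ‖γ‖⁻¹ • γ with hu_def
  have hu : ‖u‖ = 1 := by
    rw [hu_def, norm_smul, norm_inv, norm_norm, inv_mul_cancel₀ hγn]
  have horth : Orthonormal ℝ (({i₀} : Set (Fin d)).restrict fun _ => u) := by
    rw [orthonormal_iff_ite]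
    intro i j
    have hij : i = j := Subtype.ext (i.2.trans j.2.symm)
    subst hij
    rw [if_pos rfl]
    rw [real_inner_self_eq_norm_mul_norm]
    change ‖u‖ * ‖u‖ = 1
    rw [hu, one_mul]
  obtain ⟨b, hb⟩ := horth.exists_orthonormalBasis_extension_of_card_eq
    (by rw [finrank_euclideanSpace_fin, Fintype.card_fin])
  have hbu : b i₀ = u := hb i₀ rfl
  have hrep : ∀ z, (inner ℝ γ z : ℝ) = ‖γ‖ * b.repr z i₀ := by
    intro z
    have h1 : (inner ℝ u z : ℝ) = b.repr z i₀ := by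
      rw [← hbu, ← b.repr.inner_map_map (b i₀) z, b.repr_self i₀,
        EuclideanSpace.inner_single_left]
      simp
    have h2 : (inner ℝ u z : ℝ) = ‖γ‖⁻¹ * (inner ℝ γ z : ℝ) := by
      rw [hu_def, real_inner_smul_left]
    rw [← h1, h2]
    field_simp
  have hset : {z : EuclideanSpace ℝ (Fin d) | (inner ℝ γ z : ℝ) ∈ s}
      = ⇑b.repr ⁻¹' {w : EuclideanSpace ℝ (Fin d) | w i₀ ∈ (fun r => ‖γ‖ * r) ⁻¹' s} := by
    ext z
    simp only [Set.mem_setOf_eq, Set.mem_preimage, hrep z]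
  have hmeas_inner : MeasurableSet
      {w : EuclideanSpace ℝ (Fin d) | w i₀ ∈ (fun r => ‖γ‖ * r) ⁻¹' s} :=
    (EuclideanSpace.proj (𝕜 := ℝ) i₀).continuous.measurable
      ((measurable_const_mul ‖γ‖) hs)
  rw [hset, mu_rot hσ b hmeas_inner, mu_coord_aux hσ i₀ _ ((measurable_const_mul ‖γ‖) hs)]

lemma mu_inner_Iic (hσ : 0 < σ) {γ : EuclideanSpace ℝ (Fin d)} (hγ : γ ≠ 0) (t : ℝ) :
    gaussianMeasure (0 : EuclideanSpace ℝ (Fin d)) (σ^2 • 1) {z | (inner ℝ γ z : ℝ) ≤ t}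
      = ENNReal.ofReal (Phi (t / (σ * ‖γ‖))) := by
  have hγpos : 0 < ‖γ‖ := norm_pos_iff.mpr hγ
  have := mu_inner_set hσ hγ (s := Iic t) measurableSet_Iic
  have hpre : (fun r => ‖γ‖ * r) ⁻¹' (Iic t) = Iic (t / ‖γ‖) := by
    ext r
    simp only [Set.mem_preimage, Set.mem_Iic]
    rw [le_div_iff₀ hγpos, mul_comm]
  rw [hpre] at this
  rw [show {z : EuclideanSpace ℝ (Fin d) | (inner ℝ γ z : ℝ) ≤ t}
      = {z : EuclideanSpace ℝ (Fin d) | (inner ℝ γ z : ℝ) ∈ Iic t} from rfl, this,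
    gaussianReal_V_Iic hσ, div_div, mul_comm ‖γ‖ σ]

lemma mu_inner_Iio (hσ : 0 < σ) {γ : EuclideanSpace ℝ (Fin d)} (hγ : γ ≠ 0) (t : ℝ) :
    gaussianMeasure (0 : EuclideanSpace ℝ (Fin d)) (σ^2 • 1) {z | (inner ℝ γ z : ℝ) < t}
      = ENNReal.ofReal (Phi (t / (σ * ‖γ‖))) := by
  have hγpos : 0 < ‖γ‖ := norm_pos_iff.mpr hγ
  have := mu_inner_set hσ hγ (s := Iio t) measurableSet_Iio
  have hpre : (fun r => ‖γ‖ * r) ⁻¹' (Iio t) = Iio (t / ‖γ‖) := by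
    ext r
    simp only [Set.mem_preimage, Set.mem_Iio]
    rw [lt_div_iff₀ hγpos, mul_comm]
  rw [hpre] at this
  rw [show {z : EuclideanSpace ℝ (Fin d) | (inner ℝ γ z : ℝ) < t}
      = {z : EuclideanSpace ℝ (Fin d) | (inner ℝ γ z : ℝ) ∈ Iio t} from rfl, this,
    gaussianReal_V_Iio hσ, div_div, mul_comm ‖γ‖ σ]

lemma measurable_tilt (γ : EuclideanSpace ℝ (Fin d)) (σ : ℝ) :
    Measurable fun z : EuclideanSpace ℝ (Fin d) =>
      ENNReal.ofReal (Real.exp (((inner ℝ γ z : ℝ) - ‖γ‖^2/2) / σ^2)) := by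
  have hcont : Continuous fun z : EuclideanSpace ℝ (Fin d) => (inner ℝ γ z : ℝ) :=
    Continuous.inner continuous_const continuous_id
  exact ((Real.continuous_exp.comp
    ((hcont.sub continuous_const).div_const _)).measurable).ennreal_ofReal

set_option maxHeartbeats 400000 in
lemma mu_shift (hσ : 0 < σ) (γ : EuclideanSpace ℝ (Fin d))
    {S : Set (EuclideanSpace ℝ (Fin d))} (hS : MeasurableSet S) :
    gaussianMeasure (0 : EuclideanSpace ℝ (Fin d)) (σ^2 • 1) ((· + γ) ⁻¹' S)
      = ∫⁻ z in S, ENNReal.ofReal (Real.exp (((inner ℝ γ z : ℝ) - ‖γ‖^2/2) / σ^2))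
          ∂(gaussianMeasure (0 : EuclideanSpace ℝ (Fin d)) (σ^2 • 1)) := by
  have hmeas_add : Measurable (fun z : EuclideanSpace ℝ (Fin d) => z + γ) :=
    measurable_add_const γ
  have hσ2 : (0:ℝ) < σ^2 := by positivity
  set K := (2 * Real.pi * σ^2) ^ (-(d:ℝ)/2) with hK
  have hKpos : 0 < K := by rw [hK]; positivity
  set D := fun z : EuclideanSpace ℝ (Fin d) =>
    ENNReal.ofReal (K * Real.exp (-‖z‖^2 / (2*σ^2))) with hD
  have hmeasD : Measurable D := measurable_density
  have hmeas_sub : Measurable (fun w : EuclideanSpace ℝ (Fin d) => D (w - γ)) :=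
    hmeasD.comp (measurable_id.sub measurable_const)
  set f := fun z : EuclideanSpace ℝ (Fin d) =>
    ENNReal.ofReal (Real.exp (((inner ℝ γ z : ℝ) - ‖γ‖^2/2) / σ^2)) with hf
  have hmeasf : Measurable f := measurable_tilt γ σ
  have hreal : ∀ w : EuclideanSpace ℝ (Fin d),
      K * Real.exp (-‖w - γ‖^2 / (2*σ^2))
        = (K * Real.exp (-‖w‖^2 / (2*σ^2)))
            * Real.exp (((inner ℝ γ w : ℝ) - ‖γ‖^2/2) / σ^2) := by
    intro w
    rw [mul_assoc, ← Real.exp_add]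
    congr 1
    have hexpand : ‖w - γ‖^2 = ‖w‖^2 - 2 * (inner ℝ γ w : ℝ) + ‖γ‖^2 := by
      rw [norm_sub_sq_real, real_inner_comm]
    rw [hexpand]
    field_simp
    ring
  have hptD : ∀ w : EuclideanSpace ℝ (Fin d), D (w - γ) = D w * f w := by
    intro w
    show ENNReal.ofReal (K * Real.exp (-‖w - γ‖^2 / (2*σ^2)))
      = ENNReal.ofReal (K * Real.exp (-‖w‖^2 / (2*σ^2)))
          * ENNReal.ofReal (Real.exp (((inner ℝ γ w : ℝ) - ‖γ‖^2/2) / σ^2))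
    rw [← ENNReal.ofReal_mul (by positivity), hreal w]
  rw [mu_eq_withDensity hσ]
  calc (volume.withDensity (fun z : EuclideanSpace ℝ (Fin d) => ENNReal.ofReal
        ((2 * Real.pi * σ^2) ^ (-(d:ℝ)/2) * Real.exp (-‖z‖^2 / (2*σ^2))))) ((· + γ) ⁻¹' S)
      = ∫⁻ z in (· + γ) ⁻¹' S, D z ∂volume := withDensity_apply _ (hmeas_add hS)
    _ = ∫⁻ z, ((· + γ) ⁻¹' S).indicator D z ∂volume :=
        (lintegral_indicator (hmeas_add hS) _).symm
    _ = ∫⁻ z, (S.indicator (fun w => D (w - γ))) (z + γ) ∂volume := by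
        apply lintegral_congr
        intro z
        classical
        rw [Set.indicator_apply, Set.indicator_apply, Set.mem_preimage, add_sub_cancel_right]
    _ = ∫⁻ w, S.indicator (fun w => D (w - γ)) w
          ∂(Measure.map (· + γ) volume) :=
        lintegral_comp (hmeas_sub.indicator hS) hmeas_add
    _ = ∫⁻ w, S.indicator (fun w => D (w - γ)) w ∂volume := by
        rw [(measurePreserving_add_right volume γ).map_eq]
    _ = ∫⁻ w in S, D (w - γ) ∂volume := lintegral_indicator hS _
    _ = ∫⁻ w in S, D w * f w ∂volume := by
        apply lintegral_congr
        intro w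
        rw [hptD w]
    _ = ∫⁻ w in S, f w ∂(volume.withDensity D) := by
        rw [restrict_withDensity hS,
          lintegral_withDensity_eq_lintegral_mul _ hmeasD hmeasf]
        rfl

end Geometry
end SmoothingAux

/-- Smoothing certificate for a non-composing transformation
T^I_δ = I ∘ T_δ under the interpolation-invariance condition
h(T^I_β(T^I_γ'(x))) = h(T^I_{β+γ'}(x)). -/
theorem smoothing_with_interpolation_invariance
    {m d : ℕ} {Y : Type*} [Fintype Y] [MeasurableSpace Y] [MeasurableSingletonClass Y]
    (x : EuclideanSpace ℝ (Fin m))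
    (σ : ℝ) (hσ : 0 < σ)
    (T : EuclideanSpace ℝ (Fin d) → EuclideanSpace ℝ (Fin m) → EuclideanSpace ℝ (Fin m))
    (hcomp : ∀ β γ' : EuclideanSpace ℝ (Fin d), T β ∘ T γ' = T (β + γ'))
    (I : EuclideanSpace ℝ (Fin m) → EuclideanSpace ℝ (Fin m))
    (h : EuclideanSpace ℝ (Fin m) → Y) (hmeas_h : Measurable h)
    (hmeas : ∀ c : Y, MeasurableSet {β : EuclideanSpace ℝ (Fin d) | h (I (T β x)) = c})
    (hinv : ∀ β γ' : EuclideanSpace ℝ (Fin d),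
        h (I (T β (I (T γ' x)))) = h (I (T (β + γ') x)))
    (pA pB : ℝ) (hpA : pA ∈ Set.Ioo (0 : ℝ) 1) (hpB : pB ∈ Set.Ioo (0 : ℝ) 1)
    (cA : Y)
    (hA : pA ≤ (gaussianMeasure 0 (σ ^ 2 • (1 : Matrix (Fin d) (Fin d) ℝ))
            {β | h (I (T β x)) = cA}).toReal)
    (hAB : pB ≤ pA)
    (hB : ∀ c : Y, c ≠ cA →
        (gaussianMeasure 0 (σ ^ 2 • (1 : Matrix (Fin d) (Fin d) ℝ))
            {β | h (I (T β x)) = c}).toReal ≤ pB) :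
    ∀ γ : EuclideanSpace ℝ (Fin d), ‖γ‖ < σ / 2 * (PhiInv pA - PhiInv pB) →
      ∀ cB : Y, cB ≠ cA →
        gaussianMeasure 0 (σ ^ 2 • (1 : Matrix (Fin d) (Fin d) ℝ))
            {β | h (I (T β (I (T γ x)))) = cB}
          < gaussianMeasure 0 (σ ^ 2 • (1 : Matrix (Fin d) (Fin d) ℝ))
            {β | h (I (T β (I (T γ x)))) = cA} := by
  intro γ hγnorm cB hcB
  classical
  set μ : Measure (EuclideanSpace ℝ (Fin d)) :=
    gaussianMeasure 0 (σ ^ 2 • (1 : Matrix (Fin d) (Fin d) ℝ)) with hμdef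
  haveI : IsProbabilityMeasure μ := SmoothingAux.isProb hσ
  set A : Set (EuclideanSpace ℝ (Fin d)) := {β | h (I (T β x)) = cA} with hA_def
  set B : Set (EuclideanSpace ℝ (Fin d)) := {β | h (I (T β x)) = cB} with hB_def
  have hmeasA : MeasurableSet A := hmeas cA
  have hmeasB : MeasurableSet B := hmeas cB
  have hsetA : {β : EuclideanSpace ℝ (Fin d) | h (I (T β (I (T γ x)))) = cA}
      = (· + γ) ⁻¹' A := by
    ext β
    simp only [Set.mem_setOf_eq, Set.mem_preimage, hA_def]
    rw [hinv β γ]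
  have hsetB : {β : EuclideanSpace ℝ (Fin d) | h (I (T β (I (T γ x)))) = cB}
      = (· + γ) ⁻¹' B := by
    ext β
    simp only [Set.mem_setOf_eq, Set.mem_preimage, hB_def]
    rw [hinv β γ]
  rw [hsetA, hsetB]
  have hPA : Phi (PhiInv pA) = pA := SmoothingAux.Phi_PhiInv hpA
  have hPB : Phi (PhiInv pB) = pB := SmoothingAux.Phi_PhiInv hpB
  have hABlt : PhiInv pB < PhiInv pA := by nlinarith [norm_nonneg γ]
  have hμA : ENNReal.ofReal pA ≤ μ A := ENNReal.ofReal_le_of_le_toReal hA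
  have hμB : μ B ≤ ENNReal.ofReal pB := by
    rw [← ENNReal.ofReal_toReal (measure_ne_top μ B)]
    exact ENNReal.ofReal_le_ofReal (hB cB hcB)
  by_cases hγ0 : γ = 0
  · subst hγ0
    have eA : (· + (0 : EuclideanSpace ℝ (Fin d))) ⁻¹' A = A := by
      ext z; simp
    have eB : (· + (0 : EuclideanSpace ℝ (Fin d))) ⁻¹' B = B := by
      ext z; simp
    rw [eA, eB]
    have hpBA : pB < pA := by
      have := SmoothingAux.strictMono_Phi hABlt
      rwa [hPA, hPB] at this
    calc μ B ≤ ENNReal.ofReal pB := hμB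
      _ < ENNReal.ofReal pA := by
          exact (ENNReal.ofReal_lt_ofReal_iff hpA.1).mpr hpBA
      _ ≤ μ A := hμA
  · -- main case
    have hγpos : 0 < ‖γ‖ := norm_pos_iff.mpr hγ0
    have hσ2 : (0:ℝ) < σ^2 := by positivity
    have hσγ : σ * ‖γ‖ ≠ 0 := by positivity
    set aA := σ * ‖γ‖ * PhiInv pA with haA
    set aB := -(σ * ‖γ‖) * PhiInv pB with haB
    set HA : Set (EuclideanSpace ℝ (Fin d)) := {z | (inner ℝ γ z : ℝ) ≤ aA} with hHA_def
    set HB : Set (EuclideanSpace ℝ (Fin d)) := {z | (inner ℝ γ z : ℝ) < aB}ᶜ with hHB_def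
    have hcont : Continuous fun z : EuclideanSpace ℝ (Fin d) => (inner ℝ γ z : ℝ) :=
      Continuous.inner continuous_const continuous_id
    have hmeasHA : MeasurableSet HA := measurableSet_le hcont.measurable measurable_const
    have hmeasHB : MeasurableSet HB :=
      (measurableSet_lt hcont.measurable measurable_const).compl
    set f := fun z : EuclideanSpace ℝ (Fin d) =>
      ENNReal.ofReal (Real.exp (((inner ℝ γ z : ℝ) - ‖γ‖^2/2) / σ^2)) with hf_def
    have hmeasf : Measurable f := SmoothingAux.measurable_tilt γ σ
    have one_sub : ∀ q : ℝ, 0 ≤ q → q ≤ 1 →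
        (1 : ℝ≥0∞) - ENNReal.ofReal (1 - q) = ENNReal.ofReal q := by
      intro q h0 h1
      rw [show (1:ℝ≥0∞) = ENNReal.ofReal (1-q) + ENNReal.ofReal q by
        rw [← ENNReal.ofReal_add (by linarith) h0]; norm_num]
      rw [ENNReal.add_sub_cancel_left ENNReal.ofReal_ne_top]
    -- measure of halfspaces
    have hμHA : μ HA = ENNReal.ofReal pA := by
      rw [hHA_def, hμdef, SmoothingAux.mu_inner_Iic hσ hγ0 aA]
      congr 1
      rw [haA, show σ * ‖γ‖ * PhiInv pA / (σ * ‖γ‖) = PhiInv pA by field_simp, hPA]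
    have hμHBc : μ {z : EuclideanSpace ℝ (Fin d) | (inner ℝ γ z : ℝ) < aB}
        = ENNReal.ofReal (1 - pB) := by
      rw [hμdef, SmoothingAux.mu_inner_Iio hσ hγ0 aB]
      congr 1
      rw [haB, show -(σ * ‖γ‖) * PhiInv pB / (σ * ‖γ‖) = -PhiInv pB by field_simp,
        SmoothingAux.Phi_neg, hPB]
    have hμHB : μ HB = ENNReal.ofReal pB := by
      rw [hHB_def, measure_compl (measurableSet_lt hcont.measurable measurable_const)
        (measure_ne_top _ _), measure_univ, hμHBc, one_sub pB hpB.1.le hpB.2.le]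
    -- preimage halfspaces
    have hpreHA : (· + γ) ⁻¹' HA
        = {z : EuclideanSpace ℝ (Fin d) | (inner ℝ γ z : ℝ) ≤ aA - ‖γ‖^2} := by
      ext z
      simp only [Set.mem_preimage, hHA_def, Set.mem_setOf_eq]
      rw [inner_add_right, real_inner_self_eq_norm_sq]
      constructor <;> intro hh <;> linarith
    have hpreHB : (· + γ) ⁻¹' HB
        = {z : EuclideanSpace ℝ (Fin d) | (inner ℝ γ z : ℝ) < aB - ‖γ‖^2}ᶜ := by
      ext z
      simp only [Set.mem_preimage, hHB_def, Set.mem_compl_iff, Set.mem_setOf_eq]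
      rw [inner_add_right, real_inner_self_eq_norm_sq]
      constructor <;> intro hh <;> intro hcon <;> apply hh <;> linarith
    -- key evaluations
    have hvalA : μ ((· + γ) ⁻¹' HA) = ENNReal.ofReal (Phi (PhiInv pA - ‖γ‖/σ)) := by
      rw [hpreHA, hμdef, SmoothingAux.mu_inner_Iic hσ hγ0]
      congr 2
      rw [haA]
      field_simp
    have hvalB : μ ((· + γ) ⁻¹' HB) = ENNReal.ofReal (Phi (PhiInv pB + ‖γ‖/σ)) := by
      rw [hpreHB, measure_compl (measurableSet_lt hcont.measurable measurable_const)
        (measure_ne_top _ _), measure_univ, hμdef, SmoothingAux.mu_inner_Iio hσ hγ0]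
      rw [show (aB - ‖γ‖^2) / (σ * ‖γ‖) = -(PhiInv pB + ‖γ‖/σ) by
        rw [haB]; field_simp; ring]
      rw [SmoothingAux.Phi_neg]
      exact one_sub _ (SmoothingAux.Phi_nonneg _) (SmoothingAux.Phi_le_one _)
    -- NP comparisons
    have hnpA : ∫⁻ z in HA, f z ∂μ ≤ ∫⁻ z in A, f z ∂μ := by
      apply SmoothingAux.np μ hmeasf
        (c := ENNReal.ofReal (Real.exp ((aA - ‖γ‖^2/2) / σ^2))) ENNReal.ofReal_ne_top
        hmeasA hmeasHA
      · intro z hz _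
        apply ENNReal.ofReal_le_ofReal
        apply Real.exp_le_exp.mpr
        have hz' : (inner ℝ γ z : ℝ) ≤ aA := hz
        gcongr
      · intro z hz hznot
        apply ENNReal.ofReal_le_ofReal
        apply Real.exp_le_exp.mpr
        have hz' : aA < (inner ℝ γ z : ℝ) := by
          by_contra hcon
          exact hznot (by push_neg at hcon; exact hcon)
        gcongr
      · rw [hμHA]
        exact hμA
    have hnpB : ∫⁻ z in B, f z ∂μ ≤ ∫⁻ z in HB, f z ∂μ := by
      apply SmoothingAux.np μ hmeasf
        (c := ENNReal.ofReal (Real.exp ((aB - ‖γ‖^2/2) / σ^2))) ENNReal.ofReal_ne_top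
        hmeasHB hmeasB
      · intro z _ hznot
        apply ENNReal.ofReal_le_ofReal
        apply Real.exp_le_exp.mpr
        have hz' : (inner ℝ γ z : ℝ) < aB := by
          rw [hHB_def] at hznot
          simpa using hznot
        gcongr
      · intro z hz _
        apply ENNReal.ofReal_le_ofReal
        apply Real.exp_le_exp.mpr
        have hz' : aB ≤ (inner ℝ γ z : ℝ) := by
          rw [hHB_def] at hz
          simpa using hz
        gcongr
      · rw [hμHB]
        exact hμB
    -- strict middle inequality
    have hmid : Phi (PhiInv pB + ‖γ‖/σ) < Phi (PhiInv pA - ‖γ‖/σ) := by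
      apply SmoothingAux.strictMono_Phi
      have h2 : ‖γ‖ / σ < (PhiInv pA - PhiInv pB) / 2 := by
        rw [div_lt_div_iff₀ hσ (by norm_num : (0:ℝ) < 2)]
        linarith
      linarith
    -- final chain
    calc μ ((· + γ) ⁻¹' B) = ∫⁻ z in B, f z ∂μ := SmoothingAux.mu_shift hσ γ hmeasB
      _ ≤ ∫⁻ z in HB, f z ∂μ := hnpB
      _ = μ ((· + γ) ⁻¹' HB) := (SmoothingAux.mu_shift hσ γ hmeasHB).symm
      _ = ENNReal.ofReal (Phi (PhiInv pB + ‖γ‖/σ)) := hvalB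
      _ < ENNReal.ofReal (Phi (PhiInv pA - ‖γ‖/σ)) :=
          (ENNReal.ofReal_lt_ofReal_iff (SmoothingAux.Phi_pos _)).mpr hmid
      _ = μ ((· + γ) ⁻¹' HA) := hvalA.symm
      _ = ∫⁻ z in HA, f z ∂μ := SmoothingAux.mu_shift hσ γ hmeasHA
      _ ≤ ∫⁻ z in A, f z ∂μ := hnpA
      _ = μ ((· + γ) ⁻¹' A) := (SmoothingAux.mu_shift hσ γ hmeasA).symm
end

section
/- Soundness of the furthest-corner inverse constraint for bilinear interpolation: let v, w ∈ ℝ and let p_{v,w}, p_{v,w+2}, p_{v+2,w}, p_{v+2,w+2} ∈ [0,1] be pixel values. For (x,y) ∈ [v, v+2] × [w, w+2] define the bilinear interpolation I(x,y) = p_{v,w}·((2+v−x)/2)·((2+w−y)/2) + p_{v,w+2}·((2+v−x)/2)·((y−w)/2) + p_{v+2,w}·((x−v)/2)·((2+w−y)/2) + p_{v+2,w+2}·((x−v)/2)·((y−w)/2). Let x_u ∈ [v, v+2), y_u ∈ [w, w+2), and suppose p' = I(x, y) for some (x, y) with v ≤ x ≤ x_u and w ≤ y ≤ y_u. Set D :=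 ((2+v−x_u)/2)·((2+w−y_u)/2) > 0 and S := ((2+v−x_u)/2)·((y_u−w)/2) + ((x_u−v)/2)·((2+w−y_u)/2) + ((x_u−v)/2)·((y_u−w)/2). Then (p' − S)/D ≤ p_{v,w} ≤ p'/D; that is, p_{v,w} lies in the interval [p' − S, p'] · D^{-1}. -/
open Set

/-- Soundness of the furthest-corner inverse constraint for
bilinear interpolation: if p' = I(x,y) with v ≤ x ≤ x_u and w ≤ y ≤ y_u, then
(p' − S)/D ≤ p_{v,w} ≤ p'/D, where D and S are the furthest-corner weights. -/
theorem bilinear_furthest_corner_constraint_sound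
    (v w : ℝ) (pvw pvw2 pv2w pv2w2 : ℝ)
    (hvw : pvw ∈ Icc (0 : ℝ) 1) (hvw2 : pvw2 ∈ Icc (0 : ℝ) 1)
    (h2w : pv2w ∈ Icc (0 : ℝ) 1) (h2w2 : pv2w2 ∈ Icc (0 : ℝ) 1)
    (xu yu : ℝ) (hxu : xu ∈ Ico v (v + 2)) (hyu : yu ∈ Ico w (w + 2))
    (p' x y : ℝ)
    (hxl : v ≤ x) (hxr : x ≤ xu) (hyl : w ≤ y) (hyr : y ≤ yu)
    (hp' : p' = pvw * ((2 + v - x) / 2) * ((2 + w - y) / 2)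
        + pvw2 * ((2 + v - x) / 2) * ((y - w) / 2)
        + pv2w * ((x - v) / 2) * ((2 + w - y) / 2)
        + pv2w2 * ((x - v) / 2) * ((y - w) / 2)) :
    0 < ((2 + v - xu) / 2) * ((2 + w - yu) / 2) ∧
    (p' - (((2 + v - xu) / 2) * ((yu - w) / 2)
          + ((xu - v) / 2) * ((2 + w - yu) / 2)
          + ((xu - v) / 2) * ((yu - w) / 2)))
        / (((2 + v - xu) / 2) * ((2 + w - yu) / 2)) ≤ pvw ∧
    pvw ≤ p' / (((2 + v - xu) / 2) * ((2 + w - yu) / 2)) := by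
  obtain ⟨hx1, hx2⟩ := hxu
  obtain ⟨hy1, hy2⟩ := hyu
  obtain ⟨ha0, ha1⟩ := hvw
  obtain ⟨hb0, hb1⟩ := hvw2
  obtain ⟨hc0, hc1⟩ := h2w
  obtain ⟨hd0, hd1⟩ := h2w2
  have hD : 0 < ((2 + v - xu) / 2) * ((2 + w - yu) / 2) := by
    apply mul_pos <;> [skip; skip] <;> linarith
  refine ⟨hD, ?_, ?_⟩
  · rw [div_le_iff₀ hD]
    nlinarith [mul_nonneg (sub_nonneg.mpr hb1) (mul_nonneg (by linarith : (0:ℝ) ≤ 2 + v - x) (by linarith : (0:ℝ) ≤ y - w)),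
      mul_nonneg (sub_nonneg.mpr hc1) (mul_nonneg (by linarith : (0:ℝ) ≤ x - v) (by linarith : (0:ℝ) ≤ 2 + w - y)),
      mul_nonneg (sub_nonneg.mpr hd1) (mul_nonneg (by linarith : (0:ℝ) ≤ x - v) (by linarith : (0:ℝ) ≤ y - w)),
      mul_nonneg (sub_nonneg.mpr ha1) (mul_nonneg (by linarith : (0:ℝ) ≤ xu - x) (by linarith : (0:ℝ) ≤ 2 + w - y)),
      mul_nonneg (sub_nonneg.mpr ha1) (mul_nonneg (by linarith : (0:ℝ) ≤ 2 + v - xu) (by linarith : (0:ℝ) ≤ yu - y))]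
  · rw [le_div_iff₀ hD]
    nlinarith [mul_nonneg hb0 (mul_nonneg (by linarith : (0:ℝ) ≤ 2 + v - x) (by linarith : (0:ℝ) ≤ y - w)),
      mul_nonneg hc0 (mul_nonneg (by linarith : (0:ℝ) ≤ x - v) (by linarith : (0:ℝ) ≤ 2 + w - y)),
      mul_nonneg hd0 (mul_nonneg (by linarith : (0:ℝ) ≤ x - v) (by linarith : (0:ℝ) ≤ y - w)),
      mul_nonneg ha0 (mul_nonneg (by linarith : (0:ℝ) ≤ xu - x) (by linarith : (0:ℝ) ≤ 2 + w - y)),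
      mul_nonneg ha0 (mul_nonneg (by linarith : (0:ℝ) ≤ 2 + v - xu) (by linarith : (0:ℝ) ≤ yu - y))]
end
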